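/- arXiv:0909.2198 — 5 statements merged into one kernel-verified Lean document; each statement's English description precedes it below -/
import Mathlib

section
/- Let λ ∈ P⁺, i ∈ I, and w ∈ W with ℓ(s_i w) = ℓ(w) + 1. Then wλ + α_i does not belong to P(λ) = { vμ : v ∈ W, μ ∈ P⁺, μ ≤ λ }. -/
set_option maxHeartbeats 1000000


/-- The simple reflection `s_i` on the weight lattice `P = I → ℤ` (fundamental-weight
coordinates), for a Cartan matrix `C`: `(s_i λ)(h_j) = λ(h_j) − λ(h_i)·C j i`. -/
def sref (n : ℕ) (C : Fin n → Fin n → ℤ) (i : Fin n) (l : Fin n → ℤ) : Fin n → ℤ :=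
  fun j => l j - l i * C j i

/-- The simple reflection as a permutation of the weight lattice. -/
def srefPerm (n : ℕ) (C : Fin n → Fin n → ℤ) (hC : ∀ i, C i i = 2) (i : Fin n) :
    Equiv.Perm (Fin n → ℤ) :=
  Function.Involutive.toPerm (sref n C i) (by
    intro l
    funext j
    simp only [sref, hC]
    ring)

/-- The Weyl group, as the subgroup generated by the simple reflections. -/
def weylGroup (n : ℕ) (C : Fin n → Fin n → ℤ) (hC : ∀ i, C i i = 2) :
    Subgroup (Equiv.Perm (Fin n → ℤ)) :=
  Subgroup.closure (Set.range (srefPerm n C hC))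

/-- The simple root `α_i`, written in fundamental-weight coordinates: `α_i(h_j) = C j i`. -/
def alphaRoot (n : ℕ) (C : Fin n → Fin n → ℤ) (i : Fin n) : Fin n → ℤ := fun j => C j i

/-- The positive root cone `Q⁺` of non-negative integer combinations of simple roots. -/
def QPos (n : ℕ) (C : Fin n → Fin n → ℤ) : Set (Fin n → ℤ) :=
  { v | ∃ c : Fin n → ℕ, v = ∑ i, (c i : ℤ) • alphaRoot n C i }

/-- The partial order on `P`: `μ ≤ λ` iff `λ − μ ∈ Q⁺`. -/
def leQ (n : ℕ) (C : Fin n → Fin n → ℤ) (μ l : Fin n → ℤ) : Prop := l - μ ∈ QPos n C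

/-- The length of an element of the Weyl group: the least number of simple reflections
needed to express it. -/
noncomputable def wlen (n : ℕ) (C : Fin n → Fin n → ℤ) (hC : ∀ i, C i i = 2)
    (w : Equiv.Perm (Fin n → ℤ)) : ℕ :=
  sInf { m | ∃ f : Fin m → Fin n,
    w = (List.ofFn fun k => srefPerm n C hC (f k)).prod }

/-- The set `P(λ) = { vμ : v ∈ W, μ ∈ P⁺, μ ≤ λ }`. -/
def weightPSet (n : ℕ) (C : Fin n → Fin n → ℤ) (hC : ∀ i, C i i = 2) (lam : Fin n → ℤ) :
    Set (Fin n → ℤ) :=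
  { v | ∃ w ∈ weylGroup n C hC, ∃ mu : Fin n → ℤ,
      (∀ i, 0 ≤ mu i) ∧ leQ n C mu lam ∧ v = w mu }

namespace Stmt3Aux

variable {n : ℕ} (C : Fin n → Fin n → ℤ) (hC : ∀ i, C i i = 2)

lemma srefPerm_apply (i : Fin n) (x : Fin n → ℤ) :
    srefPerm n C hC i x = sref n C i x := by
  simp [srefPerm, Function.Involutive.coe_toPerm]; rfl

lemma sref_apply (i : Fin n) (x : Fin n → ℤ) (l : Fin n) :
    srefPerm n C hC i x l = x l - x i * C l i := by
  rw [srefPerm_apply]; rfl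

lemma S_mul_S (i : Fin n) : srefPerm n C hC i * srefPerm n C hC i = 1 := by
  ext x l
  simp only [Equiv.Perm.mul_apply, Equiv.Perm.one_apply, sref_apply, hC]
  ring

lemma S_inv (i : Fin n) : (srefPerm n C hC i)⁻¹ = srefPerm n C hC i :=
  inv_eq_of_mul_eq_one_right (S_mul_S C hC i)

lemma S_mem (i : Fin n) : srefPerm n C hC i ∈ weylGroup n C hC :=
  Subgroup.subset_closure ⟨i, rfl⟩

/-- product of simple reflections given by a list of indices -/
def wp (l : List (Fin n)) : Equiv.Perm (Fin n → ℤ) := (l.map (srefPerm n C hC)).prod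

lemma wp_nil : wp C hC ([] : List (Fin n)) = 1 := rfl

lemma wp_cons (t : Fin n) (l : List (Fin n)) :
    wp C hC (t :: l) = srefPerm n C hC t * wp C hC l := by
  simp [wp]

lemma wp_append (l₁ l₂ : List (Fin n)) :
    wp C hC (l₁ ++ l₂) = wp C hC l₁ * wp C hC l₂ := by
  simp [wp]

lemma wp_mem (l : List (Fin n)) : wp C hC l ∈ weylGroup n C hC := by
  induction l with
  | nil => exact one_mem _
  | cons t l ih => rw [wp_cons]; exact mul_mem (S_mem C hC t) ih

lemma wp_reverse (l : List (Fin n)) : (wp C hC l)⁻¹ = wp C hC l.reverse := by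
  induction l with
  | nil => simp [wp_nil]
  | cons t l ih =>
    rw [wp_cons, mul_inv_rev, ih, S_inv, List.reverse_cons, wp_append]
    simp [wp]

lemma mem_wlenSet_iff (w : Equiv.Perm (Fin n → ℤ)) (m : ℕ) :
    (∃ f : Fin m → Fin n,
      w = (List.ofFn fun k => srefPerm n C hC (f k)).prod) ↔
    ∃ l : List (Fin n), l.length = m ∧ w = wp C hC l := by
  constructor
  · rintro ⟨f, rfl⟩
    refine ⟨List.ofFn f, by simp, ?_⟩
    simp [wp, List.map_ofFn]; rfl
  · rintro ⟨l, rfl, rfl⟩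
    refine ⟨l.get, ?_⟩
    simp [wp, ← List.map_ofFn]

lemma wlen_le (w : Equiv.Perm (Fin n → ℤ)) (l : List (Fin n)) (hw : w = wp C hC l) :
    wlen n C hC w ≤ l.length :=
  Nat.sInf_le ((mem_wlenSet_iff C hC w l.length).2 ⟨l, rfl, hw⟩)

lemma exists_word {w : Equiv.Perm (Fin n → ℤ)} (hw : w ∈ weylGroup n C hC) :
    ∃ l : List (Fin n), w = wp C hC l := by
  induction hw using Subgroup.closure_induction with
  | mem x hx => rcases hx with ⟨i, rfl⟩; exact ⟨[i], by simp [wp]⟩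
  | one => exact ⟨[], rfl⟩
  | mul x y hx hy ihx ihy =>
    rcases ihx with ⟨l₁, rfl⟩; rcases ihy with ⟨l₂, rfl⟩
    exact ⟨l₁ ++ l₂, (wp_append C hC l₁ l₂).symm⟩
  | inv x hx ihx =>
    rcases ihx with ⟨l, rfl⟩
    exact ⟨l.reverse, wp_reverse C hC l⟩

lemma exists_reduced {w : Equiv.Perm (Fin n → ℤ)} (hw : w ∈ weylGroup n C hC) :
    ∃ l : List (Fin n), l.length = wlen n C hC w ∧ w = wp C hC l := by
  have hne : { m | ∃ f : Fin m → Fin n,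
      w = (List.ofFn fun k => srefPerm n C hC (f k)).prod }.Nonempty := by
    obtain ⟨l, hl⟩ := exists_word C hC hw
    exact ⟨l.length, (mem_wlenSet_iff C hC w l.length).2 ⟨l, rfl, hl⟩⟩
  have := Nat.sInf_mem hne
  exact (mem_wlenSet_iff C hC w _).1 this

lemma wlen_one_le {w : Equiv.Perm (Fin n → ℤ)} (hw : w ∈ weylGroup n C hC) (t : Fin n) :
    wlen n C hC (srefPerm n C hC t * w) ≤ wlen n C hC w + 1 := by
  obtain ⟨l, hl, rfl⟩ := exists_reduced C hC hw
  calc wlen n C hC (srefPerm n C hC t * wp C hC l) ≤ (t :: l).length :=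
        wlen_le C hC _ _ (by rw [wp_cons])
    _ = wlen n C hC (wp C hC l) + 1 := by simp [hl]

lemma wlen_zero {w : Equiv.Perm (Fin n → ℤ)} (hw : w ∈ weylGroup n C hC)
    (h : wlen n C hC w = 0) : w = 1 := by
  obtain ⟨l, hl, rfl⟩ := exists_reduced C hC hw
  rw [h, List.length_eq_zero_iff] at hl
  subst hl; rfl

lemma W_add {w : Equiv.Perm (Fin n → ℤ)} (hw : w ∈ weylGroup n C hC) :
    ∀ x y : Fin n → ℤ, w (x + y) = w x + w y := by
  induction hw using Subgroup.closure_induction with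
  | mem u hu =>
    rcases hu with ⟨i, rfl⟩
    intro x y
    funext l
    simp only [sref_apply, Pi.add_apply]
    ring
  | one => intro x y; rfl
  | mul u v hu hv ihu ihv =>
    intro x y
    simp only [Equiv.Perm.mul_apply, ihv, ihu]
  | inv u hu ihu =>
    intro x y
    apply u.injective
    have hui : ∀ z, u (u⁻¹ z) = z := fun z => (Equiv.eq_symm_apply u).mp rfl
    rw [hui, ihu, hui,
      hui]

/-- the action of a Weyl group element as an additive hom -/
noncomputable def Whom {w : Equiv.Perm (Fin n → ℤ)} (hw : w ∈ weylGroup n C hC) :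
    (Fin n → ℤ) →+ (Fin n → ℤ) :=
  AddMonoidHom.mk' w (W_add C hC hw)

lemma W_smul {w : Equiv.Perm (Fin n → ℤ)} (hw : w ∈ weylGroup n C hC) (c : ℤ) (x : Fin n → ℤ) :
    w (c • x) = c • w x := by
  have := map_zsmul (Whom C hC hw) c x
  simpa [Whom] using this

/-- alternating list of indices, `altL i j k = [i, j, i, j, ...]` of length `k`. -/
def altL : Fin n → Fin n → ℕ → List (Fin n)
  | _, _, 0 => []
  | i, j, (k+1) => i :: altL j i k

lemma altL_length (i j : Fin n) (k : ℕ) : (altL i j k).length = k := by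
  induction k generalizing i j with
  | zero => rfl
  | succ k ih => simp [altL, ih]

/-- the letter at position `k` of the alternating sequence starting with `i`. -/
def tAt (i j : Fin n) (k : ℕ) : Fin n := if k % 2 = 0 then i else j

lemma altL_add (i j : Fin n) (p q : ℕ) :
    altL i j (p + q) = altL i j p ++ (if p % 2 = 0 then altL i j q else altL j i q) := by
  induction p generalizing i j with
  | zero => simp [altL]
  | succ p ih =>
    have h1 : p + 1 + q = (p + q) + 1 := by omega
    rw [h1]
    show i :: altL j i (p + q) = _
    rw [ih j i]
    rcases Nat.mod_two_eq_zero_or_one p with h | h <;>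
      simp [altL, h, Nat.add_mod, List.cons_append]

lemma altL_succ (i j : Fin n) (k : ℕ) :
    altL i j (k + 1) = altL i j k ++ [tAt i j k] := by
  have := altL_add i j k 1
  rcases Nat.mod_two_eq_zero_or_one k with h | h <;>
    simpa [h, tAt, altL] using this

lemma tAt_succ (i j : Fin n) (k : ℕ) : tAt i j (k + 1) = tAt j i k := by
  rcases Nat.mod_two_eq_zero_or_one k with h | h <;> simp [tAt, h, Nat.add_mod]

lemma tAt_mem (i j : Fin n) (k : ℕ) : tAt i j k = i ∨ tAt i j k = j := by
  rcases Nat.mod_two_eq_zero_or_one k with h | h <;> simp [tAt, h]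

lemma tAt_ne (i j : Fin n) (hij : i ≠ j) (k : ℕ) : tAt i j (k + 1) ≠ tAt i j k := by
  rcases Nat.mod_two_eq_zero_or_one k with h | h <;>
    simp [tAt, h, Nat.add_mod, hij, hij.symm]

/-- helper: positivity from product -/
lemma pos_aux {a b : ℤ} (hab : 0 < a * b) (ha : 0 ≤ a) : 0 < b := by
  rcases lt_or_ge 0 b with h | h
  · exact h
  · exact absurd hab (by nlinarith)

/-- The two-coordinate invariant. -/
def Phi (x : Fin n → ℤ) (i j : Fin n) : Prop :=
  0 < x i ∧ 0 < 2 * x i - C i j * x j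

lemma phi_step (i j : Fin n) (hij : i ≠ j) (x : Fin n → ℤ)
    (hA : C i j ≤ -1) (hB : C j i ≤ -1) (hq : 4 ≤ C i j * C j i)
    (h : Phi C x j i) : Phi C (srefPerm n C hC j x) i j := by
  obtain ⟨h1, h2⟩ := h
  have e1 : srefPerm n C hC j x i = x i - x j * C i j := sref_apply C hC j x i
  have e2 : srefPerm n C hC j x j = - x j := by
    rw [sref_apply C hC j x j, hC]; ring
  constructor
  · rw [e1]
    refine pos_aux (a := -C j i) ?_ (by linarith)
    have hh : 4 * x j ≤ (C i j * C j i) * x j :=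
      mul_le_mul_of_nonneg_right hq h1.le
    nlinarith [hh, h2]
  · rw [e1, e2]
    refine pos_aux (a := -C j i) ?_ (by linarith)
    have hh : 4 * x j ≤ (C i j * C j i) * x j :=
      mul_le_mul_of_nonneg_right hq h1.le
    nlinarith [hh, h2]

lemma posBig : ∀ (k : ℕ) (i j : Fin n), i ≠ j → ∀ (x : Fin n → ℤ),
    C i j ≤ -1 → C j i ≤ -1 → 4 ≤ C i j * C j i →
    Phi C x i j → Phi C x j i → Phi C (wp C hC (altL j i k) x) i j := by
  intro k
  induction k with
  | zero => intro i j hij x _ _ _ h1 _; simpa [altL, wp_nil] using h1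
  | succ k ih =>
    intro i j hij x hA hB hq h1 h2
    show Phi C (wp C hC (j :: altL i j k) x) i j
    rw [wp_cons]
    have hmid := ih j i hij.symm x hB hA (by rw [mul_comm]; exact hq) h2 h1
    have := phi_step C hC i j hij (wp C hC (altL i j k) x) hA hB hq hmid
    simpa [Equiv.Perm.mul_apply] using this

section posSmall

variable (i j : Fin n) (x : Fin n → ℤ)

lemma wp_one_apply : wp C hC (altL j i 1) x i = x i - x j * C i j := by
  simp [altL, wp_cons, wp_nil, Equiv.Perm.mul_apply, sref_apply]

lemma wp_two_apply : wp C hC (altL j i 2) x i =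
    (C i j * C j i - 1) * x i - C i j * x j := by
  simp only [altL, wp_cons, wp_nil, mul_one, Equiv.Perm.mul_apply, sref_apply, hC]
  ring

lemma wp_three_apply : wp C hC (altL j i 3) x i =
    (C i j * C j i - 1) * x i + C i j * (2 - C i j * C j i) * x j := by
  simp only [altL, wp_cons, wp_nil, mul_one, Equiv.Perm.mul_apply, sref_apply, hC]
  ring

lemma wp_four_apply : wp C hC (altL j i 4) x i =
    ((C i j * C j i) ^ 2 - 3 * (C i j * C j i) + 1) * x i
      + C i j * (2 - C i j * C j i) * x j := by
  simp only [altL, wp_cons, wp_nil, mul_one, Equiv.Perm.mul_apply, sref_apply, hC]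
  ring

lemma wp_five_apply : wp C hC (altL j i 5) x i =
    ((C i j * C j i) ^ 2 - 3 * (C i j * C j i) + 1) * x i
      + (- C i j) * ((C i j * C j i) ^ 2 - 4 * (C i j * C j i) + 3) * x j := by
  simp only [altL, wp_cons, wp_nil, mul_one, Equiv.Perm.mul_apply, sref_apply, hC]
  ring

variable {i j x}

lemma posSmall1 (hA : C i j ≤ 0) (hxi : 0 < x i) (hxj : 0 < x j) :
    0 < wp C hC (altL j i 1) x i := by
  rw [wp_one_apply]
  nlinarith [mul_nonneg (neg_nonneg.2 hA) hxj.le]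

lemma posSmall2 (hA : C i j ≤ 0) (hB : C j i ≤ 0) (hq : 1 ≤ C i j * C j i)
    (hxi : 0 < x i) (hxj : 0 < x j) :
    0 < wp C hC (altL j i 2) x i := by
  rw [wp_two_apply]
  have t1 : 0 ≤ (C i j * C j i - 1) * x i := mul_nonneg (by linarith) hxi.le
  have hA0 : C i j ≠ 0 := fun h => by simp [h] at hq
  have hA1 : C i j ≤ -1 := by omega
  nlinarith [mul_le_mul_of_nonneg_right hA1 hxj.le]

lemma posSmall3 (hA : C i j ≤ 0) (hB : C j i ≤ 0) (hq : 2 ≤ C i j * C j i)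
    (hxi : 0 < x i) (hxj : 0 < x j) :
    0 < wp C hC (altL j i 3) x i := by
  rw [wp_three_apply]
  have t1 : x i ≤ (C i j * C j i - 1) * x i := le_mul_of_one_le_left hxi.le (by linarith)
  have t2 : 0 ≤ (C i j * (2 - C i j * C j i)) * x j :=
    mul_nonneg (by nlinarith) hxj.le
  nlinarith [t1, t2]

lemma posSmall4 (hA : C i j ≤ 0) (hB : C j i ≤ 0) (hq : 3 ≤ C i j * C j i)
    (hxi : 0 < x i) (hxj : 0 < x j) :
    0 < wp C hC (altL j i 4) x i := by
  rw [wp_four_apply]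
  have t4 : 0 ≤ (C i j * C j i) * (C i j * C j i - 3) :=
    mul_nonneg (by linarith) (by linarith)
  have t1 : x i ≤ ((C i j * C j i) ^ 2 - 3 * (C i j * C j i) + 1) * x i :=
    le_mul_of_one_le_left hxi.le (by nlinarith)
  have t2 : 0 ≤ (C i j * (2 - C i j * C j i)) * x j :=
    mul_nonneg (by nlinarith) hxj.le
  nlinarith [t1, t2]

lemma posSmall5 (hA : C i j ≤ 0) (hB : C j i ≤ 0) (hq : 3 ≤ C i j * C j i)
    (hxi : 0 < x i) (hxj : 0 < x j) :
    0 < wp C hC (altL j i 5) x i := by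
  rw [wp_five_apply]
  have t4 : 0 ≤ (C i j * C j i) * (C i j * C j i - 3) :=
    mul_nonneg (by linarith) (by linarith)
  have t1 : x i ≤ ((C i j * C j i) ^ 2 - 3 * (C i j * C j i) + 1) * x i :=
    le_mul_of_one_le_left hxi.le (by nlinarith)
  have t5 : 0 ≤ (C i j * C j i - 1) * (C i j * C j i - 3) :=
    mul_nonneg (by linarith) (by linarith)
  have t2 : 0 ≤ ((- C i j) * ((C i j * C j i) ^ 2 - 4 * (C i j * C j i) + 3)) * x j := by
    refine mul_nonneg (mul_nonneg (by linarith) (by nlinarith)) hxj.le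
  nlinarith [t1, t2]

end posSmall

section braid

variable {i j : Fin n}

lemma braid2 (hij : i ≠ j) (hA : C i j = 0) (hB : C j i = 0) :
    wp C hC (altL i j 2) = wp C hC (altL j i 2) := by
  ext x l
  simp only [altL, wp_cons, wp_nil, mul_one, Equiv.Perm.mul_apply, sref_apply, hC, hA, hB]
  ring

lemma braid3 (hij : i ≠ j) (hA : C i j = -1) (hB : C j i = -1) :
    wp C hC (altL i j 3) = wp C hC (altL j i 3) := by
  ext x l
  simp only [altL, wp_cons, wp_nil, mul_one, Equiv.Perm.mul_apply, sref_apply, hC, hA, hB]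
  ring

lemma braid4 (hij : i ≠ j) (hA : C i j = -1) (hB : C j i = -2) :
    wp C hC (altL i j 4) = wp C hC (altL j i 4) := by
  ext x l
  simp only [altL, wp_cons, wp_nil, mul_one, Equiv.Perm.mul_apply, sref_apply, hC, hA, hB]
  ring

lemma braid6 (hij : i ≠ j) (hA : C i j = -1) (hB : C j i = -3) :
    wp C hC (altL i j 6) = wp C hC (altL j i 6) := by
  ext x l
  simp only [altL, wp_cons, wp_nil, mul_one, Equiv.Perm.mul_apply, sref_apply, hC, hA, hB]
  ring

/-- shortening an over-long alternating word using a braid relation. -/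
lemma short (i j : Fin n) (M r : ℕ) (hM : 1 ≤ M)
    (hbr : wp C hC (altL i j M) = wp C hC (altL j i M)) :
    ∃ l : List (Fin n), l.length + 2 = M + (r + 1) ∧
      wp C hC (altL i j (M + (r + 1))) = wp C hC l := by
  obtain ⟨M', rfl⟩ : ∃ M', M = M' + 1 := ⟨M - 1, by omega⟩
  rw [altL_add, wp_append, hbr, altL_succ j i M']
  rcases Nat.mod_two_eq_zero_or_one M' with h | h
  · -- M' even, M odd, tail starts with j
    have h2 : (M' + 1) % 2 = 1 := by omega
    refine ⟨altL j i M' ++ altL i j r, by simp [altL_length]; omega, ?_⟩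
    rw [if_neg (by omega), tAt, if_pos h]
    show wp C hC (altL j i M' ++ [j]) * wp C hC (j :: altL i j r) = _
    rw [wp_append, wp_cons, wp_append]
    simp only [wp, List.map_cons, List.map_nil, List.prod_cons, List.prod_nil, mul_one]
    rw [mul_assoc, ← mul_assoc (srefPerm n C hC j), S_mul_S, one_mul]
  · -- M' odd, M even, tail starts with i
    have h2 : (M' + 1) % 2 = 0 := by omega
    refine ⟨altL j i M' ++ altL j i r, by simp [altL_length]; omega, ?_⟩
    rw [if_pos h2, tAt, if_neg (by omega)]
    show wp C hC (altL j i M' ++ [i]) * wp C hC (i :: altL j i r) = _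
    rw [wp_append, wp_cons, wp_append]
    simp only [wp, List.map_cons, List.map_nil, List.prod_cons, List.prod_nil, mul_one]
    rw [mul_assoc, ← mul_assoc (srefPerm n C hC i), S_mul_S, one_mul]

end braid

/-- Key lemma: if `ℓ(s_i w) ≥ ℓ(w)` then `(w μ)_i > 0` for strictly dominant `μ`. -/
lemma main' (hoff : ∀ i j, i ≠ j → C i j ≤ 0) (hzero : ∀ i j, C i j = 0 → C j i = 0) :
    ∀ (m : ℕ) (w : Equiv.Perm (Fin n → ℤ)), w ∈ weylGroup n C hC →
    wlen n C hC w = m → ∀ (i : Fin n) (μ : Fin n → ℤ), (∀ t, 0 < μ t) →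
    m ≤ wlen n C hC (srefPerm n C hC i * w) → 0 < w μ i := by
  intro m
  induction m using Nat.strong_induction_on with
  | _ m IH =>
  intro w hw hwm i μ hμ hsw
  obtain ⟨l, hll, hwl⟩ := exists_reduced C hC hw
  rcases l with _ | ⟨j, l'⟩
  · -- w = 1
    rw [hwl, wp_nil]
    simpa using hμ i
  · -- w = s_j * v
    set v := wp C hC l' with hvdef
    have hwv0 : w = srefPerm n C hC j * v := by rw [hwl, wp_cons]
    have hm : m = l'.length + 1 := by
      rw [← hwm, ← hll, List.length_cons]
    have hvW : v ∈ weylGroup n C hC := wp_mem C hC l'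
    have hvlen : wlen n C hC v = l'.length := by
      have h1 : wlen n C hC v ≤ l'.length := wlen_le C hC v l' rfl
      have h2 : wlen n C hC w ≤ wlen n C hC v + 1 := by
        rw [hwv0]; exact wlen_one_le C hC hvW j
      omega
    by_cases hij : j = i
    · -- descent at i: contradiction
      exfalso
      have : srefPerm n C hC i * w = v := by
        rw [hwv0, hij, ← mul_assoc, S_mul_S, one_mul]
      rw [this, hvlen] at hsw
      omega
    · -- the inner alternating induction
      have hij' : i ≠ j := fun h => hij h.symm
      have hA0 : C i j ≤ 0 := hoff i j hij'
      have hB0 : C j i ≤ 0 := hoff j i hij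
      have INNER : ∀ (d : ℕ) (v' : Equiv.Perm (Fin n → ℤ)), v' ∈ weylGroup n C hC →
          wlen n C hC v' = d → ∀ (k : ℕ), d + (k + 1) ≤ m →
          w = wp C hC (altL j i (k + 1)) * v' →
          d < wlen n C hC (srefPerm n C hC (tAt j i k) * v') →
          0 < w μ i := by
        intro d
        induction d using Nat.strong_induction_on with
        | _ d IHd =>
        intro v' hv' hvd k hkm hwv hlast
        by_cases hpeel : wlen n C hC (srefPerm n C hC (tAt j i (k + 1)) * v') < d
        · -- peel one more letter
          set t := tAt j i (k + 1) with htdef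
          have hv2 : srefPerm n C hC t * v' ∈ weylGroup n C hC :=
            mul_mem (S_mem C hC t) hv'
          refine IHd (wlen n C hC (srefPerm n C hC t * v')) (by omega)
            (srefPerm n C hC t * v') hv2 rfl (k + 1) (by omega) ?_ ?_
          · rw [altL_succ j i (k + 1), wp_append, hwv]
            have : wp C hC [tAt j i (k + 1)] = srefPerm n C hC t := by
              simp [wp, htdef]
            rw [this, mul_assoc, ← mul_assoc (srefPerm n C hC t), S_mul_S, one_mul]
          · rw [← mul_assoc, S_mul_S, one_mul, hvd]
            exact hpeel
        · -- stop: both coordinates of v' μ are positive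
          push_neg at hpeel
          have hdm : d < m := by omega
          have hxt : 0 < v' μ (tAt j i (k + 1)) :=
            IH d hdm v' hv' hvd (tAt j i (k + 1)) μ hμ (hvd ▸ hpeel)
          have hxt' : 0 < v' μ (tAt j i k) :=
            IH d hdm v' hv' hvd (tAt j i k) μ hμ (hvd ▸ hlast.le)
          obtain ⟨hxi, hxj⟩ : 0 < v' μ i ∧ 0 < v' μ j := by
            rcases Nat.mod_two_eq_zero_or_one k with hpar | hpar
            · have e1 : tAt j i k = j := by simp [tAt, hpar]
              have e2 : tAt j i (k + 1) = i := by
                have : (k + 1) % 2 = 1 := by omega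
                simp [tAt, this]
              exact ⟨e2 ▸ hxt, e1 ▸ hxt'⟩
            · have e1 : tAt j i k = i := by simp [tAt, hpar]
              have e2 : tAt j i (k + 1) = j := by
                have : (k + 1) % 2 = 0 := by omega
                simp [tAt, this]
              exact ⟨e1 ▸ hxt', e2 ▸ hxt⟩
          have hwx : w μ = wp C hC (altL j i (k + 1)) (v' μ) := by
            rw [hwv, Equiv.Perm.mul_apply]
          -- shortening helper, giving a contradiction
          have shorten : ∀ (M r : ℕ), 1 ≤ M →
              wp C hC (altL i j M) = wp C hC (altL j i M) →
              M + (r + 1) = k + 2 → False := by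
            intro M r hM hbr hMr
            obtain ⟨l₀, hl₀, heq₀⟩ := short C hC i j M r hM hbr
            obtain ⟨lv, hlv, hveq⟩ := exists_reduced C hC hv'
            have hsiw : srefPerm n C hC i * w = wp C hC (l₀ ++ lv) := by
              rw [hwv, ← mul_assoc, ← wp_cons]
              have hcons : (i :: altL j i (k + 1)) = altL i j (k + 2) := rfl
              rw [hcons, ← hMr, heq₀, wp_append, hveq]
            have hle : wlen n C hC (srefPerm n C hC i * w) ≤ l₀.length + lv.length := by
              have := wlen_le C hC _ (l₀ ++ lv) hsiw
              simpa using this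
            have : m ≤ l₀.length + lv.length := le_trans hsw hle
            omega
          -- case analysis on the Cartan integers
          by_cases hAz : C i j = 0
          · have hBz : C j i = 0 := hzero i j hAz
            rcases Nat.eq_zero_or_pos k with rfl | hk1
            · rw [hwx, wp_one_apply, hAz]
              simpa using hxi
            · exact absurd (braid2 C hC hij' hAz hBz) (by
                intro hbr
                exact shorten 2 (k - 1) (by omega) hbr (by omega))
          · have hBz : C j i ≠ 0 := fun h => hAz (hzero j i h)
            have hA1 : C i j ≤ -1 := by omega
            have hB1 : C j i ≤ -1 := by omega
            have hprod : (1:ℤ) * 1 ≤ (-C i j) * (-C j i) :=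
              mul_le_mul (by linarith) (by linarith) (by norm_num) (by linarith)
            have hq1 : 1 ≤ C i j * C j i := by nlinarith [hprod]
            have hfact : 0 ≤ (C i j * C j i) + C i j + C j i + 1 := by
              nlinarith [mul_nonneg (by linarith : (0:ℤ) ≤ -C i j - 1)
                (by linarith : (0:ℤ) ≤ -C j i - 1)]
            by_cases hq4 : 4 ≤ C i j * C j i
            · have c1 : 0 < 2 * v' μ i - C i j * v' μ j := by
                nlinarith [mul_nonneg (by linarith : (0:ℤ) ≤ -C i j) hxj.le]
              have c2 : 0 < 2 * v' μ j - C j i * v' μ i := by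
                nlinarith [mul_nonneg (by linarith : (0:ℤ) ≤ -C j i) hxi.le]
              have hphi := posBig C hC (k + 1) i j hij' (v' μ) hA1 hB1 hq4
                ⟨hxi, c1⟩ ⟨hxj, c2⟩
              rw [hwx]
              exact hphi.1
            · push_neg at hq4
              have hq3 : C i j * C j i ≤ 3 := by omega
              have hqcases : C i j * C j i = 1 ∨ C i j * C j i = 2 ∨ C i j * C j i = 3 := by
                omega
              rcases hqcases with hq | hq | hq
              · -- type A₂ : braid length 3
                have hAv : C i j = -1 := by
                  have : -1 ≤ C i j := by linarith [hfact, hq]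
                  linarith
                have hBv : C j i = -1 := by
                  rw [hAv] at hq; linarith
                rcases Nat.lt_or_ge k 2 with hk | hk
                · interval_cases k
                  · rw [hwx]; exact posSmall1 C hC hA0 hxi hxj
                  · rw [hwx]; exact posSmall2 C hC hA0 hB0 hq1 hxi hxj
                · exact absurd (braid3 C hC hij' hAv hBv) (fun hbr =>
                    shorten 3 (k - 2) (by omega) hbr (by omega))
              · -- braid length 4
                rcases Nat.lt_or_ge k 3 with hk | hk
                · interval_cases k
                  · rw [hwx]; exact posSmall1 C hC hA0 hxi hxj
                  · rw [hwx]; exact posSmall2 C hC hA0 hB0 hq1 hxi hxj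
                  · rw [hwx]; exact posSmall3 C hC hA0 hB0 (by omega) hxi hxj
                · have hbr : wp C hC (altL i j 4) = wp C hC (altL j i 4) := by
                    have hA2 : -2 ≤ C i j := by linarith [hfact, hq]
                    have : C i j = -1 ∨ C i j = -2 := by omega
                    rcases this with hAv | hAv
                    · have hBv : C j i = -2 := by rw [hAv] at hq; linarith
                      exact braid4 C hC hij' hAv hBv
                    · have hBv : C j i = -1 := by rw [hAv] at hq; linarith
                      exact (braid4 C hC hij hBv hAv).symm
                  exact absurd hbr (fun hbr =>
                    shorten 4 (k - 3) (by omega) hbr (by omega))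
              · -- braid length 6
                rcases Nat.lt_or_ge k 5 with hk | hk
                · interval_cases k
                  · rw [hwx]; exact posSmall1 C hC hA0 hxi hxj
                  · rw [hwx]; exact posSmall2 C hC hA0 hB0 hq1 hxi hxj
                  · rw [hwx]; exact posSmall3 C hC hA0 hB0 (by omega) hxi hxj
                  · rw [hwx]; exact posSmall4 C hC hA0 hB0 (by omega) hxi hxj
                  · rw [hwx]; exact posSmall5 C hC hA0 hB0 (by omega) hxi hxj
                · have hbr : wp C hC (altL i j 6) = wp C hC (altL j i 6) := by
                    have hA3 : -3 ≤ C i j := by linarith [hfact, hq]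
                    have hcase : C i j = -1 ∨ C i j = -2 ∨ C i j = -3 := by omega
                    rcases hcase with hAv | hAv | hAv
                    · have hBv : C j i = -3 := by rw [hAv] at hq; linarith
                      exact braid6 C hC hij' hAv hBv
                    · exfalso; rw [hAv] at hq; omega
                    · have hBv : C j i = -1 := by rw [hAv] at hq; linarith
                      exact (braid6 C hC hij hBv hAv).symm
                  exact absurd hbr (fun hbr =>
                    shorten 6 (k - 5) (by omega) hbr (by omega))
      -- apply INNER with k = 0
      refine INNER l'.length v hvW hvlen 0 (by omega) ?_ ?_
      · rw [hwv0]
        congr 1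
      · have ht0 : tAt j i 0 = j := rfl
        rw [ht0, ← hwv0, hwm]
        omega

section bil

variable (hfin : Finite (weylGroup n C hC))

/-- `W`-averaged bilinear form. -/
noncomputable def Bil (x y : Fin n → ℤ) : ℤ :=
  letI := Fintype.ofFinite (weylGroup n C hC)
  ∑ v : (weylGroup n C hC), ∑ k : Fin n,
    (v : Equiv.Perm (Fin n → ℤ)) x k * (v : Equiv.Perm (Fin n → ℤ)) y k

lemma Bil_symm (x y : Fin n → ℤ) : Bil C hC hfin x y = Bil C hC hfin y x := by
  unfold Bil
  congr 1; funext v; congr 1; funext k; ring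

lemma Bil_add_left (x y z : Fin n → ℤ) :
    Bil C hC hfin (x + y) z = Bil C hC hfin x z + Bil C hC hfin y z := by
  unfold Bil
  rw [← Finset.sum_add_distrib]
  congr 1; funext v
  rw [← Finset.sum_add_distrib]
  congr 1; funext k
  rw [W_add C hC v.2 x y]
  simp [add_mul]

lemma Bil_smul_left (c : ℤ) (x z : Fin n → ℤ) :
    Bil C hC hfin (c • x) z = c * Bil C hC hfin x z := by
  unfold Bil
  rw [Finset.mul_sum]
  congr 1; funext v
  rw [Finset.mul_sum]
  congr 1; funext k
  rw [W_smul C hC v.2 c x]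
  simp; ring

lemma Bil_add_right (x y z : Fin n → ℤ) :
    Bil C hC hfin x (y + z) = Bil C hC hfin x y + Bil C hC hfin x z := by
  rw [Bil_symm, Bil_add_left, Bil_symm C hC hfin y x, Bil_symm C hC hfin z x]

lemma Bil_smul_right (c : ℤ) (x z : Fin n → ℤ) :
    Bil C hC hfin x (c • z) = c * Bil C hC hfin x z := by
  rw [Bil_symm, Bil_smul_left, Bil_symm C hC hfin z x]

lemma Bil_sub_left (x y z : Fin n → ℤ) :
    Bil C hC hfin (x - y) z = Bil C hC hfin x z - Bil C hC hfin y z := by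
  have h : x - y = x + (-1 : ℤ) • y := by funext l; simp; ring
  rw [h, Bil_add_left, Bil_smul_left]; ring

lemma Bil_inv {u : Equiv.Perm (Fin n → ℤ)} (hu : u ∈ weylGroup n C hC) (x y : Fin n → ℤ) :
    Bil C hC hfin (u x) (u y) = Bil C hC hfin x y := by
  unfold Bil
  letI := Fintype.ofFinite (weylGroup n C hC)
  rw [← Equiv.sum_comp (Equiv.mulRight (⟨u, hu⟩ : weylGroup n C hC))
    (fun v : (weylGroup n C hC) => ∑ k : Fin n,
      (v : Equiv.Perm (Fin n → ℤ)) x k * (v : Equiv.Perm (Fin n → ℤ)) y k)]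
  apply Finset.sum_congr rfl
  intro v _
  congr 1

/-- the positive scale factor of the form at the simple root `α_i`. -/
noncomputable def BK (i : Fin n) : ℤ :=
  Bil C hC hfin (alphaRoot n C i) (alphaRoot n C i)
    - Bil C hC hfin (alphaRoot n C i) (Pi.single i 1)

lemma sref_eq_sub (i : Fin n) (x : Fin n → ℤ) :
    srefPerm n C hC i x = x + (-(x i)) • alphaRoot n C i := by
  funext l
  simp only [sref_apply, Pi.add_apply, Pi.smul_apply, alphaRoot, smul_eq_mul]
  ring

lemma Bil_reflect (i : Fin n) (y : Fin n → ℤ) :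
    Bil C hC hfin (alphaRoot n C i) y = BK C hC hfin i * y i := by
  have key : ∀ x z : Fin n → ℤ,
      Bil C hC hfin x z + (-(z i)) * Bil C hC hfin x (alphaRoot n C i)
        + ((-(x i)) * Bil C hC hfin (alphaRoot n C i) z
          + (-(x i)) * ((-(z i)) * Bil C hC hfin (alphaRoot n C i) (alphaRoot n C i)))
        = Bil C hC hfin x z := by
    intro x z
    have h := Bil_inv C hC hfin (S_mem C hC i) x z
    rw [sref_eq_sub C hC i x, sref_eq_sub C hC i z] at h
    simp only [Bil_add_left, Bil_add_right, Bil_smul_left, Bil_smul_right] at h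
    linear_combination h
  have h := key (Pi.single i 1) y
  have hsi : (Pi.single i 1 : Fin n → ℤ) i = 1 := Pi.single_eq_same i 1
  rw [hsi] at h
  have hxy : Bil C hC hfin (Pi.single i 1) (alphaRoot n C i)
      = Bil C hC hfin (alphaRoot n C i) (Pi.single i 1) := Bil_symm C hC hfin _ _
  rw [hxy] at h
  have hys : Bil C hC hfin (Pi.single i 1) y = Bil C hC hfin y (Pi.single i 1) :=
    Bil_symm C hC hfin _ _
  unfold BK
  linarith [h]

lemma Bil_alpha_self (i : Fin n) :
    Bil C hC hfin (alphaRoot n C i) (alphaRoot n C i) = 2 * BK C hC hfin i := by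
  have h := Bil_reflect C hC hfin i (alphaRoot n C i)
  have : alphaRoot n C i i = 2 := hC i
  rw [this] at h
  linarith

lemma BK_pos (i : Fin n) : 0 < BK C hC hfin i := by
  have h2 : 0 < Bil C hC hfin (alphaRoot n C i) (alphaRoot n C i) := by
    unfold Bil
    letI := Fintype.ofFinite (weylGroup n C hC)
    apply Finset.sum_pos'
    · intro v _
      exact Finset.sum_nonneg fun k _ => mul_self_nonneg _
    · refine ⟨1, Finset.mem_univ _, ?_⟩
      apply Finset.sum_pos'
      · intro k _
        exact mul_self_nonneg _
      · refine ⟨i, Finset.mem_univ _, ?_⟩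
        have : ((1 : (weylGroup n C hC)) : Equiv.Perm (Fin n → ℤ)) (alphaRoot n C i) i
            = 2 := by simp [alphaRoot, hC]
        rw [this]; norm_num
  have := Bil_alpha_self C hC hfin i
  linarith

end bil

end Stmt3Aux

open Stmt3Aux

/-- Let `λ ∈ P⁺`, `i ∈ I` and `w ∈ W` with `ℓ(s_i w) = ℓ(w) + 1`. Then
`wλ + α_i ∉ P(λ) = { vμ : v ∈ W, μ ∈ P⁺, μ ≤ λ }`. -/
theorem stmt3 (n : ℕ) (hn : 0 < n) (C : Fin n → Fin n → ℤ) (hC : ∀ i, C i i = 2)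
    (hoff : ∀ i j, i ≠ j → C i j ≤ 0) (hzero : ∀ i j, C i j = 0 → C j i = 0)
    (d : Fin n → ℤ) (hd : ∀ i, 0 < d i) (hsym : ∀ i j, d i * C i j = d j * C j i)
    (hfin : Finite (weylGroup n C hC))
    (lam : Fin n → ℤ) (hlam : ∀ i, 0 ≤ lam i)
    (i : Fin n) (w : Equiv.Perm (Fin n → ℤ)) (hw : w ∈ weylGroup n C hC)
    (hlen : wlen n C hC (srefPerm n C hC i * w) = wlen n C hC w + 1) :
    w lam + alphaRoot n C i ∉ weightPSet n C hC lam := by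
  intro hmem
  obtain ⟨u, hu, μ0, hμ0, hle, heq⟩ := hmem
  obtain ⟨b, hb⟩ := hle
  have hKpos := BK_pos C hC hfin i
  -- step 1 : expand the norm of ν = w lam + α_i
  have e1 : Bil C hC hfin (alphaRoot n C i) (w lam) = BK C hC hfin i * (w lam i) :=
    Bil_reflect C hC hfin i (w lam)
  have e2 : Bil C hC hfin (w lam) (alphaRoot n C i) = BK C hC hfin i * (w lam i) := by
    rw [Bil_symm]; exact e1
  have h1 : Bil C hC hfin (w lam + alphaRoot n C i) (w lam + alphaRoot n C i)
      = Bil C hC hfin lam lam + 2 * (BK C hC hfin i) * (w lam i) + 2 * BK C hC hfin i := by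
    rw [Bil_add_left, Bil_add_right, Bil_add_right, Bil_inv C hC hfin hw lam lam,
      e1, e2, Bil_alpha_self]
    ring
  -- step 2 : ν = u μ0 has the same norm as μ0
  have h2 : Bil C hC hfin (w lam + alphaRoot n C i) (w lam + alphaRoot n C i)
      = Bil C hC hfin μ0 μ0 := by
    rw [heq]; exact Bil_inv C hC hfin hu μ0 μ0
  -- step 3 : norm comparison of μ0 and lam
  have h3 : Bil C hC hfin lam lam - Bil C hC hfin μ0 μ0
      = ∑ k : Fin n, (b k : ℤ) * (BK C hC hfin k * (lam k + μ0 k)) := by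
    have hsplit : Bil C hC hfin (lam - μ0) (lam + μ0)
        = Bil C hC hfin lam lam - Bil C hC hfin μ0 μ0 := by
      rw [Bil_sub_left, Bil_add_right, Bil_add_right,
        Bil_symm C hC hfin μ0 lam]
      ring
    rw [← hsplit, hb]
    have hmap := map_sum (AddMonoidHom.mk' (fun x => Bil C hC hfin x (lam + μ0))
      (fun a c => Bil_add_left C hC hfin a c (lam + μ0)))
      (fun k : Fin n => (b k : ℤ) • alphaRoot n C k) Finset.univ
    simp only [AddMonoidHom.mk'_apply] at hmap
    rw [hmap]
    apply Finset.sum_congr rfl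
    intro k _
    rw [Bil_smul_left, Bil_reflect]
    simp [Pi.add_apply]
  have h4 : 0 ≤ ∑ k : Fin n, (b k : ℤ) * (BK C hC hfin k * (lam k + μ0 k)) := by
    apply Finset.sum_nonneg
    intro k _
    have hbk : (0:ℤ) ≤ (b k : ℤ) := Int.natCast_nonneg _
    have : 0 ≤ BK C hC hfin k * (lam k + μ0 k) :=
      mul_nonneg (BK_pos C hC hfin k).le (by have := hlam k; have := hμ0 k; linarith)
    exact mul_nonneg hbk this
  -- conclude (w lam) i ≤ -1
  have h5 : w lam i ≤ -1 := by
    by_contra hcon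
    push_neg at hcon
    have h0 : 0 ≤ w lam i := by omega
    have hKw : 0 ≤ BK C hC hfin i * (w lam i) := mul_nonneg hKpos.le h0
    linarith [h1, h2, h3, h4, hKw, hKpos]
  -- contradiction with the key positivity lemma
  have hge : wlen n C hC w ≤ wlen n C hC (srefPerm n C hC i * w) := by omega
  set ρ : Fin n → ℤ := fun _ => 1 with hρ
  set N : ℕ := (w ρ i).toNat with hN
  have hstrict : ∀ t, 0 < ((N : ℤ) • lam + ρ) t := by
    intro t
    have : 0 ≤ (N:ℤ) * lam t := mul_nonneg (by positivity) (hlam t)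
    simp only [Pi.add_apply, Pi.smul_apply, smul_eq_mul, hρ]
    linarith
  have hpos := main' C hC hoff hzero (wlen n C hC w) w hw rfl i
    ((N : ℤ) • lam + ρ) hstrict hge
  have hlin : w ((N : ℤ) • lam + ρ)
      = (N : ℤ) • w lam + w ρ := by
    rw [W_add C hC hw, W_smul C hC hw]
  rw [hlin] at hpos
  simp only [Pi.add_apply, Pi.smul_apply, smul_eq_mul] at hpos
  have htoNat : w ρ i ≤ (N : ℤ) := by
    rw [hN]; exact Int.self_le_toNat _
  have hmul : (N : ℤ) * (w lam i) ≤ (N : ℤ) * (-1) :=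
    mul_le_mul_of_nonneg_left h5 (by positivity)
  linarith
end

section
/- Let ξ ∈ ℂ^× be an element of infinite multiplicative order. Then every polynomial f ∈ ℂ[u] with f(0) = 1 admits a unique factorization f(u) = ∏_{k=1}^m f_{a_k, r_k}(u), where m ∈ ℤ_{≥0}, a_k ∈ ℂ^×, r_k ∈ ℤ_{≥1}, and for all k ≠ j and all 0 ≤ p < min{r_k, r_j} one has a_k/a_j ≠ ξ^{±(r_k + r_j − 2p)}. (Uniqueness is up to permutation of the factors.) -/
open Polynomial

/-- The `q`-string polynomial `f_{a,r}(u) = ∏_{j=0}^{r-1} (1 - a ξ^{r-1-2j} u)`. -/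
noncomputable def qString (ξ a : ℂ) (r : ℕ) : Polynomial ℂ :=
  ∏ j ∈ Finset.range r, (1 - C (a * ξ ^ ((r : ℤ) - 1 - 2 * j)) * X)

/-- The non-resonance condition on the collection of pairs `(a_k, r_k)`:
for all `k ≠ j` and `0 ≤ p < min (r_k) (r_j)`, `a_k / a_j ≠ ξ^{±(r_k + r_j - 2p)}`. -/
def NonResonant (ξ : ℂ) {m : ℕ} (a : Fin m → ℂ) (r : Fin m → ℕ) : Prop :=
  ∀ k j, k ≠ j → ∀ p : ℕ, p < min (r k) (r j) →
    a k / a j ≠ ξ ^ ((r k : ℤ) + (r j : ℤ) - 2 * p) ∧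
    a k / a j ≠ ξ ^ (-((r k : ℤ) + (r j : ℤ) - 2 * p))

namespace QStringAux

/-- interval multiset {e, e-1, ..., e-r+1} -/
def ivl (x : ℤ × ℕ) : Multiset ℤ := (Multiset.range x.2).map (fun j : ℕ => x.1 - (j : ℤ))

def GoodZ (x y : ℤ × ℕ) : Prop :=
  ∀ p : ℕ, p < min x.2 y.2 → y.1 ≠ x.1 - x.2 + p ∧ x.1 ≠ y.1 - y.2 + p

lemma mem_ivl {z : ℤ} {x : ℤ × ℕ} : z ∈ ivl x ↔ ∃ j : ℕ, j < x.2 ∧ z = x.1 - j := by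
  simp [ivl, Multiset.mem_map, Multiset.mem_range, eq_comm, and_comm]

lemma ivl_card (x : ℤ × ℕ) : (ivl x).card = x.2 := by simp [ivl]

lemma top_mem_ivl {x : ℤ × ℕ} (h : 1 ≤ x.2) : x.1 ∈ ivl x :=
  mem_ivl.2 ⟨0, h, by simp⟩

lemma le_top_of_mem {z : ℤ} {x : ℤ × ℕ} (h : z ∈ ivl x) : z ≤ x.1 := by
  obtain ⟨j, _, rfl⟩ := mem_ivl.1 h; omega

lemma GoodZ.symm {x y : ℤ × ℕ} (h : GoodZ x y) : GoodZ y x := by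
  intro p hp
  rw [min_comm] at hp
  exact ⟨(h p hp).2, (h p hp).1⟩

lemma GoodZ_self (x : ℤ × ℕ) : GoodZ x x := by
  intro p hp
  simp only [min_self] at hp
  constructor <;> omega

lemma ivl_le_of_mem {T : Multiset (ℤ × ℕ)} {x : ℤ × ℕ} (hx : x ∈ T) :
    ivl x ≤ (T.map ivl).sum :=
  Multiset.single_le_sum (fun m _ => Multiset.zero_le m) _ (Multiset.mem_map_of_mem _ hx)

lemma exists_mem_of_mem_sum {z : ℤ} {T : Multiset (ℤ × ℕ)}
    (h : z ∈ (T.map ivl).sum) : ∃ x ∈ T, z ∈ ivl x := by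
  induction T using Multiset.induction with
  | empty => simp at h
  | cons a s ih =>
    simp only [Multiset.map_cons, Multiset.sum_cons, Multiset.mem_add] at h
    rcases h with h | h
    · exact ⟨a, Multiset.mem_cons_self a s, h⟩
    · obtain ⟨x, hx, hz⟩ := ih h
      exact ⟨x, Multiset.mem_cons_of_mem hx, hz⟩



lemma ivl_nodup (x : ℤ × ℕ) : (ivl x).Nodup := by
  have : Function.Injective (fun j : ℕ => x.1 - (j : ℤ)) := by
    intro a b hab
    simp only at hab
    omega
  exact Multiset.Nodup.map this (Multiset.nodup_range _)

lemma ivl_le {x : ℤ × ℕ} {E : Multiset ℤ} (h : ∀ j : ℕ, j < x.2 → x.1 - j ∈ E) :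
    ivl x ≤ E := by
  refine (Multiset.le_iff_subset (ivl_nodup x)).2 ?_
  intro z hz
  obtain ⟨j, hj, rfl⟩ := mem_ivl.1 hz
  exact h j hj

-- max element and run length of a nonempty multiset of integers
lemma exists_top (E : Multiset ℤ) (hE : E ≠ 0) :
    ∃ (e : ℤ) (r : ℕ), e ∈ E ∧ (∀ z ∈ E, z ≤ e) ∧ 1 ≤ r ∧
      (∀ j : ℕ, j < r → e - (j : ℤ) ∈ E) ∧ e - (r : ℤ) ∉ E := by
  have hne : E.toFinset.Nonempty := by
    rw [Finset.nonempty_iff_ne_empty]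
    simpa [Multiset.toFinset_eq_empty] using hE
  set e := E.toFinset.max' hne with he_def
  have he : e ∈ E := Multiset.mem_toFinset.1 (E.toFinset.max'_mem hne)
  have hmax : ∀ z ∈ E, z ≤ e := fun z hz =>
    E.toFinset.le_max' z (Multiset.mem_toFinset.2 hz)
  have hfind : ∃ j : ℕ, e - (j : ℤ) ∉ E := by
    set mn := E.toFinset.min' hne with hmn_def
    have hmn : ∀ z ∈ E, mn ≤ z := fun z hz =>
      E.toFinset.min'_le z (Multiset.mem_toFinset.2 hz)
    refine ⟨(e - mn).toNat + 1, fun hmem => ?_⟩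
    have h1 : mn ≤ e := hmn e he
    have := hmn _ hmem
    omega
  classical
  refine ⟨e, Nat.find hfind, he, hmax, ?_, ?_, Nat.find_spec hfind⟩
  · rcases Nat.eq_zero_or_pos (Nat.find hfind) with h | h
    · exfalso; have := Nat.find_spec hfind; rw [h] at this; simp at this; exact this he
    · exact h
  · intro j hj
    have := Nat.find_min hfind hj
    simpa using this

/-- key lemma: any good decomposition contains the maximal string `(e, r)`. -/
lemma keyZ {E : Multiset ℤ} {T : Multiset (ℤ × ℕ)} {e : ℤ} {r : ℕ}
    (h1 : ∀ x ∈ T, 1 ≤ x.2) (hg : ∀ x ∈ T, ∀ y ∈ T, GoodZ x y)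
    (hsum : (T.map ivl).sum = E)
    (he : e ∈ E) (hmax : ∀ z ∈ E, z ≤ e)
    (hrun : ∀ j : ℕ, j < r → e - (j : ℤ) ∈ E) (hout : e - (r : ℤ) ∉ E) :
    (e, r) ∈ T := by
  classical
  -- strings of T containing e
  have hmem : ∃ x ∈ T, e ∈ ivl x := exists_mem_of_mem_sum (hsum ▸ he)
  set F := T.filter (fun x => e ∈ ivl x) with hF
  have hFne : F.toFinset.Nonempty := by
    obtain ⟨x, hx, hex⟩ := hmem
    exact ⟨x, Multiset.mem_toFinset.2 (Multiset.mem_filter.2 ⟨hx, hex⟩)⟩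
  obtain ⟨x, hxF, hxmax⟩ := F.toFinset.exists_max_image Prod.snd hFne
  rw [Multiset.mem_toFinset, hF, Multiset.mem_filter] at hxF
  obtain ⟨hxT, hex⟩ := hxF
  -- the top of x is e
  have hx1 : x.1 = e := by
    have h1' : e ≤ x.1 := le_top_of_mem hex
    have h2' : x.1 ≤ e := hmax _ (by
      rw [← hsum]
      exact Multiset.mem_of_le (ivl_le_of_mem hxT) (top_mem_ivl (h1 x hxT)))
    omega
  -- the length of x is r
  have hivlE : ∀ y ∈ T, ∀ z ∈ ivl y, z ∈ E := fun y hy z hz =>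
    hsum ▸ Multiset.mem_of_le (ivl_le_of_mem hy) hz
  have hler : x.2 ≤ r := by
    by_contra hlt
    push_neg at hlt
    exact hout (hivlE x hxT _ (mem_ivl.2 ⟨r, hlt, by omega⟩))
  have hger : r ≤ x.2 := by
    by_contra hlt
    push_neg at hlt
    -- e - x.2 ∈ E, so it lies in some string y
    obtain ⟨y, hyT, hey⟩ := exists_mem_of_mem_sum (hsum ▸ hrun x.2 hlt : (e - (x.2:ℤ)) ∈ (T.map ivl).sum)
    obtain ⟨j, hjy, hj⟩ := mem_ivl.1 hey
    have hy_le : y.1 ≤ e := hmax _ (hivlE y hyT _ (top_mem_ivl (h1 y hyT)))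
    rcases eq_or_lt_of_le hy_le with hy_eq | hy_lt
    · -- y tops at e too, and is longer than x: contradicts maximality of x in F
      have hjx : j = x.2 := by omega
      have hyF : y ∈ F := Multiset.mem_filter.2 ⟨hyT, mem_ivl.2 ⟨0, by omega, by omega⟩⟩
      have := hxmax y (Multiset.mem_toFinset.2 hyF)
      omega
    · -- y tops strictly below e: resonance with x
      have hgood := hg x hxT y hyT
      have hjmin : j < min x.2 y.2 := by omega
      exact (hgood j hjmin).1 (by omega)
  have : x = (e, r) := by
    cases x
    simp only [Prod.mk.injEq]
    constructor <;> omega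
  exact this ▸ hxT

theorem uniqueZ : ∀ (N : ℕ) (E : Multiset ℤ), E.card = N →
    ∀ T T' : Multiset (ℤ × ℕ),
    (∀ x ∈ T, 1 ≤ x.2) → (∀ x ∈ T, ∀ y ∈ T, GoodZ x y) → (T.map ivl).sum = E →
    (∀ x ∈ T', 1 ≤ x.2) → (∀ x ∈ T', ∀ y ∈ T', GoodZ x y) → (T'.map ivl).sum = E →
    T = T' := by
  intro N
  induction N using Nat.strong_induction_on with
  | _ N IH =>
    intro E hcard T T' h1 hg hsum h1' hg' hsum'
    rcases eq_or_ne E 0 with rfl | hE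
    · -- both decompositions are empty
      have hz : ∀ (S : Multiset (ℤ × ℕ)), (∀ x ∈ S, 1 ≤ x.2) → (S.map ivl).sum = 0 → S = 0 := by
        intro S hS hSsum
        by_contra hne
        obtain ⟨x, hx⟩ := Multiset.exists_mem_of_ne_zero hne
        have : x.1 ∈ (S.map ivl).sum :=
          Multiset.mem_of_le (ivl_le_of_mem hx) (top_mem_ivl (hS x hx))
        rw [hSsum] at this
        simp at this
      rw [hz T h1 hsum, hz T' h1' hsum']
    · obtain ⟨e, r, he, hmax, hr1, hrun, hout⟩ := exists_top E hE
      have hT : (e, r) ∈ T := keyZ h1 hg hsum he hmax hrun hout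
      have hT' : (e, r) ∈ T' := keyZ h1' hg' hsum' he hmax hrun hout
      have hle : ivl (e, r) ≤ E := hsum ▸ ivl_le_of_mem hT
      set E' := E - ivl (e, r) with hE'
      have hcard' : E'.card < N := by
        have h1'' : E'.card = E.card - (ivl (e, r)).card := by
          rw [hE', Multiset.card_sub hle]
        rw [ivl_card] at h1''
        have hrcard : r ≤ E.card := by
          have := Multiset.card_le_card hle
          rwa [ivl_card] at this
        omega
      have herase : ∀ (S : Multiset (ℤ × ℕ)), (e, r) ∈ S → (S.map ivl).sum = E →
          ((S.erase (e, r)).map ivl).sum = E' := by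
        intro S hS hSsum
        have : S = (e, r) ::ₘ S.erase (e, r) := (Multiset.cons_erase hS).symm
        rw [this, Multiset.map_cons, Multiset.sum_cons] at hSsum
        rw [hE', ← hSsum]
        simp
      have hTe := herase T hT hsum
      have hT'e := herase T' hT' hsum'
      have hsub : T.erase (e, r) = T'.erase (e, r) := by
        refine IH E'.card hcard' E' rfl _ _ ?_ ?_ hTe ?_ ?_ hT'e
        · exact fun x hx => h1 x (Multiset.mem_of_mem_erase hx)
        · exact fun x hx y hy => hg x (Multiset.mem_of_mem_erase hx) y (Multiset.mem_of_mem_erase hy)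
        · exact fun x hx => h1' x (Multiset.mem_of_mem_erase hx)
        · exact fun x hx y hy => hg' x (Multiset.mem_of_mem_erase hx) y (Multiset.mem_of_mem_erase hy)
      calc T = (e, r) ::ₘ T.erase (e, r) := (Multiset.cons_erase hT).symm
        _ = (e, r) ::ₘ T'.erase (e, r) := by rw [hsub]
        _ = T' := Multiset.cons_erase hT'

theorem existsZ : ∀ (N : ℕ) (E : Multiset ℤ), E.card = N →
    ∃ T : Multiset (ℤ × ℕ), (∀ x ∈ T, 1 ≤ x.2) ∧ (∀ x ∈ T, ∀ y ∈ T, GoodZ x y) ∧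
      (T.map ivl).sum = E := by
  intro N
  induction N using Nat.strong_induction_on with
  | _ N IH =>
    intro E hcard
    rcases eq_or_ne E 0 with rfl | hE
    · exact ⟨0, by simp, by simp, by simp⟩
    · obtain ⟨e, r, he, hmax, hr1, hrun, hout⟩ := exists_top E hE
      have hle : ivl (e, r) ≤ E := ivl_le (fun j hj => hrun j hj)
      set E' := E - ivl (e, r) with hE'
      have hcard' : E'.card < N := by
        have h1'' : E'.card = E.card - (ivl (e, r)).card := by
          rw [hE', Multiset.card_sub hle]
        rw [ivl_card] at h1''
        have hrcard : r ≤ E.card := by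
          have := Multiset.card_le_card hle
          rwa [ivl_card] at this
        have : 1 ≤ E.card := Multiset.card_pos.2 hE
        omega
      obtain ⟨T', hT1, hTg, hTsum⟩ := IH E'.card hcard' E' rfl
      have hE'le : E' ≤ E := Multiset.sub_le_self E (ivl (e, r))
      have hgood : ∀ y ∈ T', GoodZ (e, r) y := by
        intro y hyT p hp
        simp only [lt_min_iff] at hp
        have hymem : ∀ z ∈ ivl y, z ∈ E' :=
          fun z hz => hTsum ▸ Multiset.mem_of_le (ivl_le_of_mem hyT) hz
        constructor
        · intro hres
          -- then e - r ∈ ivl y ⊆ E' ≤ E, contradicting hout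
          apply hout
          have : (e - (r:ℤ)) ∈ ivl y := mem_ivl.2 ⟨p, hp.2, by omega⟩
          exact Multiset.mem_of_le hE'le (hymem _ this)
        · intro hres
          -- then y.1 = e + y.2 - p > e, but y.1 ∈ E
          have hy1 : y.1 ∈ E := Multiset.mem_of_le hE'le (hymem _ (top_mem_ivl (hT1 y hyT)))
          have := hmax _ hy1
          omega
      refine ⟨(e, r) ::ₘ T', ?_, ?_, ?_⟩
      · intro x hx
        rcases Multiset.mem_cons.1 hx with rfl | hx
        · exact hr1
        · exact hT1 x hx
      · intro x hx y hy
        rcases Multiset.mem_cons.1 hx with rfl | hx <;> rcases Multiset.mem_cons.1 hy with rfl | hy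
        · exact GoodZ_self _
        · exact hgood y hy
        · exact (hgood x hx).symm
        · exact hTg x hx y hy
      · rw [Multiset.map_cons, Multiset.sum_cons, hTsum, hE']
        exact add_tsub_cancel_of_le hle


/-! ## ℂ level -/

section C
variable {ξ : ℂ}

lemma zpow_ne_one (hξ0 : ξ ≠ 0) (hinf : ∀ n : ℕ, 0 < n → ξ ^ n ≠ 1)
    {n : ℤ} (hn : n ≠ 0) : ξ ^ n ≠ 1 := by
  intro h
  rcases lt_trichotomy n 0 with hlt | rfl | hgt
  · have h1 : ξ ^ (-n) = 1 := by rw [zpow_neg, h, inv_one]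
    have h2 : ξ ^ ((-n).toNat) = 1 := by
      rw [← zpow_natCast, Int.toNat_of_nonneg (by omega)]; exact h1
    exact hinf (-n).toNat (by omega) h2
  · exact hn rfl
  · have h2 : ξ ^ (n.toNat) = 1 := by
      rw [← zpow_natCast, Int.toNat_of_nonneg (by omega)]; exact h
    exact hinf n.toNat (by omega) h2

lemma zpow_injZ (hξ0 : ξ ≠ 0) (hinf : ∀ n : ℕ, 0 < n → ξ ^ n ≠ 1)
    {s t : ℤ} (h : ξ ^ s = ξ ^ t) : s = t := by
  by_contra hne
  refine zpow_ne_one hξ0 hinf (sub_ne_zero.2 hne) ?_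
  rw [zpow_sub₀ hξ0, h, div_self (zpow_ne_zero _ hξ0)]

/-- elements of the string `(a, r)` -/
noncomputable def stringM (ξ a : ℂ) (r : ℕ) : Multiset ℂ :=
  (Multiset.range r).map (fun j : ℕ => a * ξ ^ ((r : ℤ) - 1 - 2 * j))

noncomputable def strSum (ξ : ℂ) (S : Multiset (ℂ × ℕ)) : Multiset ℂ :=
  (S.map fun x => stringM ξ x.1 x.2).sum

def pairGood (ξ : ℂ) (x y : ℂ × ℕ) : Prop := ∀ p : ℕ, p < min x.2 y.2 →
  x.1 / y.1 ≠ ξ ^ ((x.2 : ℤ) + y.2 - 2 * p) ∧ x.1 / y.1 ≠ ξ ^ (-((x.2 : ℤ) + y.2 - 2 * p))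

def InCoset (ξ c x : ℂ) : Prop := ∃ n : ℤ, x = c * ξ ^ (2 * n)

/-- the string corresponding to integer data `(n, r)` in the coset of `c` -/
noncomputable def psi (ξ c : ℂ) (t : ℤ × ℕ) : ℂ × ℕ := (c * ξ ^ (2 * t.1 - t.2 + 1), t.2)

lemma top_mem_stringM (a : ℂ) {r : ℕ} (hr : 1 ≤ r) :
    a * ξ ^ ((r : ℤ) - 1) ∈ stringM ξ a r := by
  rw [stringM, Multiset.mem_map]
  exact ⟨0, Multiset.mem_range.2 hr, by norm_num⟩

lemma stringM_le_strSum {S : Multiset (ℂ × ℕ)} {x : ℂ × ℕ} (hx : x ∈ S) :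
    stringM ξ x.1 x.2 ≤ strSum ξ S :=
  Multiset.single_le_sum (fun m _ => Multiset.zero_le m) _
    (Multiset.mem_map_of_mem _ hx)

lemma strSum_add (S S' : Multiset (ℂ × ℕ)) :
    strSum ξ (S + S') = strSum ξ S + strSum ξ S' := by
  simp [strSum]

lemma pairGood_symm {x y : ℂ × ℕ} (hx : x.1 ≠ 0) (hy : y.1 ≠ 0)
    (h : pairGood ξ x y) : pairGood ξ y x := by
  intro p hp
  rw [min_comm] at hp
  obtain ⟨h1, h2⟩ := h p hp
  have hinv : y.1 / x.1 = (x.1 / y.1)⁻¹ := by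
    rw [← inv_div]
  have hc : (x.2 : ℤ) + y.2 = (y.2 : ℤ) + x.2 := by ring
  constructor
  · intro heq
    apply h2
    rw [hinv] at heq
    rw [← inv_inv (x.1 / y.1), heq, ← zpow_neg, hc]
  · intro heq
    apply h1
    rw [hinv] at heq
    rw [← inv_inv (x.1 / y.1), heq, ← zpow_neg, neg_neg, hc]

lemma pairGood_self (hξ0 : ξ ≠ 0) (hinf : ∀ n : ℕ, 0 < n → ξ ^ n ≠ 1)
    {x : ℂ × ℕ} (hx : x.1 ≠ 0) : pairGood ξ x x := by
  intro p hp
  simp only [min_self] at hp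
  rw [div_self hx]
  constructor
  · intro heq
    exact zpow_ne_one hξ0 hinf (by omega) heq.symm
  · intro heq
    exact zpow_ne_one hξ0 hinf (by omega) heq.symm

lemma stringM_psi (hξ0 : ξ ≠ 0) (c : ℂ) (t : ℤ × ℕ) :
    stringM ξ (psi ξ c t).1 (psi ξ c t).2 = (ivl t).map (fun k : ℤ => c * ξ ^ (2 * k)) := by
  rw [stringM, psi, ivl, Multiset.map_map]
  refine Multiset.map_congr rfl ?_
  intro j hj
  simp only [Function.comp_apply]
  rw [mul_assoc, ← zpow_add₀ hξ0]
  congr 1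
  push_cast
  ring

lemma psi_div (hξ0 : ξ ≠ 0) {c : ℂ} (hc : c ≠ 0) (t t' : ℤ × ℕ) :
    (psi ξ c t).1 / (psi ξ c t').1 =
      ξ ^ ((2 * t.1 - t.2 + 1) - (2 * t'.1 - t'.2 + 1)) := by
  rw [psi, psi]
  simp only
  rw [mul_div_mul_left _ _ hc, ← zpow_sub₀ hξ0]

lemma pairGood_psi_iff (hξ0 : ξ ≠ 0) (hinf : ∀ n : ℕ, 0 < n → ξ ^ n ≠ 1)
    {c : ℂ} (hc : c ≠ 0) (t t' : ℤ × ℕ) :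
    pairGood ξ (psi ξ c t) (psi ξ c t') ↔ GoodZ t t' := by
  have hdiv := psi_div hξ0 hc t t'
  have hiff : ∀ s u : ℤ, ξ ^ s = ξ ^ u ↔ s = u :=
    fun s u => ⟨zpow_injZ hξ0 hinf, fun h => by rw [h]⟩
  constructor
  · intro h p hp
    obtain ⟨h1, h2⟩ := h p (by simpa [psi] using hp)
    constructor
    · intro heq
      apply h1
      rw [hdiv, hiff]
      simp only [psi]
      omega
    · intro heq
      apply h2
      rw [hdiv, hiff]
      simp only [psi]
      omega
  · intro h p hp
    simp only [psi] at hp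
    obtain ⟨h1, h2⟩ := h p hp
    constructor
    · intro heq
      rw [hdiv, hiff] at heq
      simp only [psi] at heq
      omega
    · intro heq
      rw [hdiv, hiff] at heq
      simp only [psi] at heq
      omega

end C

section helpers
variable {α β γ : Type*}

lemma sum_map_map (s : Multiset α) (f : α → Multiset β) (g : β → γ) :
    ((s.map f).sum).map g = (s.map fun a => (f a).map g).sum := by
  induction s using Multiset.induction with
  | empty => simp
  | cons a s ih => simp [ih]

lemma filter_sum_map (p : β → Prop) [DecidablePred p] (s : Multiset α) (f : α → Multiset β) :
    ((s.map f).sum).filter p = (s.map fun a => (f a).filter p).sum := by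
  induction s using Multiset.induction with
  | empty => simp
  | cons a s ih => simp [Multiset.filter_add, ih]

lemma sum_map_ite (Q : α → Prop) [DecidablePred Q] (s : Multiset α) (f : α → Multiset β) :
    (s.map fun a => if Q a then f a else 0).sum = ((s.filter Q).map f).sum := by
  induction s using Multiset.induction with
  | empty => simp
  | cons a s ih =>
    by_cases h : Q a
    · rw [Multiset.filter_cons_of_pos _ h]
      simp [h, ih]
    · rw [Multiset.filter_cons_of_neg _ h]
      simp [h, ih]

lemma prod_sum_map {M : Type*} [CommMonoid M] (s : Multiset α) (f : α → Multiset M) :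
    ((s.map f).sum).prod = (s.map fun a => (f a).prod).prod := by
  induction s using Multiset.induction with
  | empty => simp
  | cons a s ih => simp [ih]

end helpers

section C2
variable {ξ : ℂ}

lemma InCoset_self (hξ0 : ξ ≠ 0) (c : ℂ) : InCoset ξ c c :=
  ⟨0, by simp⟩

lemma InCoset_shift (hξ0 : ξ ≠ 0) {c x : ℂ} (k : ℤ) :
    InCoset ξ c (x * ξ ^ (2 * k)) ↔ InCoset ξ c x := by
  constructor
  · rintro ⟨n, hn⟩
    refine ⟨n - k, ?_⟩
    have hx : x = x * ξ ^ (2 * k) * ξ ^ (-(2 * k)) := by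
      rw [mul_assoc, ← zpow_add₀ hξ0]
      simp
    rw [hx, hn, mul_assoc, ← zpow_add₀ hξ0]
    congr 1
    ring
  · rintro ⟨n, rfl⟩
    exact ⟨n + k, by rw [mul_assoc, ← zpow_add₀ hξ0]; congr 1; ring⟩

/-- the top of the string `(a, r)` -/
noncomputable def top (ξ : ℂ) (x : ℂ × ℕ) : ℂ := x.1 * ξ ^ ((x.2 : ℤ) - 1)

lemma mem_stringM_iff (hξ0 : ξ ≠ 0) {a z : ℂ} {r : ℕ} :
    z ∈ stringM ξ a r ↔ ∃ j : ℕ, j < r ∧ z = (a * ξ ^ ((r : ℤ) - 1)) * ξ ^ (-2 * (j : ℤ)) := by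
  rw [stringM, Multiset.mem_map]
  constructor
  · rintro ⟨j, hj, rfl⟩
    refine ⟨j, Multiset.mem_range.1 hj, ?_⟩
    rw [mul_assoc, ← zpow_add₀ hξ0]
    congr 1
    try ring
  · rintro ⟨j, hj, rfl⟩
    refine ⟨j, Multiset.mem_range.2 hj, ?_⟩
    rw [mul_assoc, ← zpow_add₀ hξ0]
    congr 1
    try ring

/-- every element of a string is in the same coset as its top -/
lemma InCoset_of_mem_stringM (hξ0 : ξ ≠ 0) {c a z : ℂ} {r : ℕ}
    (hz : z ∈ stringM ξ a r) :
    (InCoset ξ c z ↔ InCoset ξ c (a * ξ ^ ((r : ℤ) - 1))) := by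
  obtain ⟨j, hj, rfl⟩ := (mem_stringM_iff hξ0).1 hz
  have : (-2 : ℤ) * j = 2 * (-(j : ℤ)) := by ring
  rw [this]
  exact InCoset_shift hξ0 (-(j : ℤ))

lemma stringM_filter_pos (hξ0 : ξ ≠ 0) {c a : ℂ} {r : ℕ}
    [DecidablePred (InCoset ξ c)]
    (h : InCoset ξ c (a * ξ ^ ((r : ℤ) - 1))) :
    (stringM ξ a r).filter (InCoset ξ c) = stringM ξ a r :=
  Multiset.filter_eq_self.2 fun z hz => (InCoset_of_mem_stringM hξ0 hz).2 h

lemma stringM_filter_neg (hξ0 : ξ ≠ 0) {c a : ℂ} {r : ℕ}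
    [DecidablePred (InCoset ξ c)]
    (h : ¬ InCoset ξ c (a * ξ ^ ((r : ℤ) - 1))) :
    (stringM ξ a r).filter (InCoset ξ c) = 0 :=
  Multiset.filter_eq_nil.2 fun z hz hzc => h ((InCoset_of_mem_stringM hξ0 hz).1 hzc)

lemma mul_zpow_shift (hξ0 : ξ ≠ 0) (x : ℂ) (s u t : ℤ) (h : s + u = t) :
    x * ξ ^ s * ξ ^ u = x * ξ ^ t := by
  rw [mul_assoc, ← zpow_add₀ hξ0, h]

/-- strings in different cosets are automatically non-resonant -/
lemma cross_pairGood (hξ0 : ξ ≠ 0) {c : ℂ} {x y : ℂ × ℕ}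
    (hx : InCoset ξ c (top ξ x)) (hy : ¬ InCoset ξ c (top ξ y)) (hy1 : y.1 ≠ 0) :
    pairGood ξ x y := by
  have key : ∀ T s : ℤ, (y.2 : ℤ) - x.2 - T = 2 * s → x.1 / y.1 = ξ ^ T →
      InCoset ξ c (top ξ y) := by
    intro T s hs heq
    have hyx : y.1 = x.1 * ξ ^ (-T) := by
      rw [(div_eq_iff hy1).1 heq, mul_comm (ξ ^ T) y.1, mul_assoc, ← zpow_add₀ hξ0,
        show T + -T = 0 by ring, zpow_zero, mul_one]
    have hexp : -T + ((y.2 : ℤ) - 1) = ((x.2 : ℤ) - 1) + 2 * s := by omega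
    have htop : top ξ y = top ξ x * ξ ^ (2 * s) := by
      rw [top, top, hyx,
        mul_zpow_shift hξ0 x.1 (-T) ((y.2 : ℤ) - 1) (((x.2 : ℤ) - 1) + 2 * s) hexp,
        mul_zpow_shift hξ0 x.1 ((x.2 : ℤ) - 1) (2 * s) (((x.2 : ℤ) - 1) + 2 * s) rfl]
    rw [htop]
    exact (InCoset_shift hξ0 _).2 hx
  intro p hp
  constructor
  · intro heq
    exact hy (key ((x.2 : ℤ) + y.2 - 2 * p) ((p : ℤ) - x.2) (by ring) heq)
  · intro heq
    exact hy (key (-((x.2 : ℤ) + y.2 - 2 * p)) ((y.2 : ℤ) - p) (by ring) heq)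

lemma top_psi (hξ0 : ξ ≠ 0) (c : ℂ) (t : ℤ × ℕ) :
    top ξ (psi ξ c t) = c * ξ ^ (2 * t.1) := by
  rw [top, psi]
  exact mul_zpow_shift hξ0 c _ _ _ (by ring)

end C2

section C3
variable {ξ : ℂ}

lemma g_injective (hξ0 : ξ ≠ 0) (hinf : ∀ n : ℕ, 0 < n → ξ ^ n ≠ 1)
    {c : ℂ} (hc : c ≠ 0) :
    Function.Injective (fun k : ℤ => c * ξ ^ (2 * k)) := by
  intro k k' h
  simp only [mul_right_inj' hc] at h
  have := zpow_injZ hξ0 hinf h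
  omega

lemma psi_phi (hξ0 : ξ ≠ 0) {c : ℂ} {x : ℂ × ℕ} {n : ℤ}
    (h : top ξ x = c * ξ ^ (2 * n)) : x = psi ξ c (n, x.2) := by
  have hx1 : x.1 = c * ξ ^ (2 * n - (x.2 : ℤ) + 1) := by
    have h0 : x.1 * ξ ^ ((x.2 : ℤ) - 1) * ξ ^ (1 - (x.2 : ℤ)) = x.1 * ξ ^ (0 : ℤ) :=
      mul_zpow_shift hξ0 x.1 _ _ _ (by ring)
    rw [top] at h
    rw [h, mul_zpow_shift hξ0 c (2 * n) (1 - (x.2 : ℤ)) (2 * n - (x.2 : ℤ) + 1) (by ring)] at h0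
    simpa using h0.symm
  have hpsi : psi ξ c (n, x.2) = (c * ξ ^ (2 * n - (x.2 : ℤ) + 1), x.2) := rfl
  rw [hpsi]
  exact Prod.ext hx1 rfl

lemma strSum_eq_zero {S : Multiset (ℂ × ℕ)} (h1 : ∀ x ∈ S, 1 ≤ x.2)
    (hsum : strSum ξ S = 0) : S = 0 := by
  by_contra hne
  obtain ⟨x, hx⟩ := Multiset.exists_mem_of_ne_zero hne
  have hle := stringM_le_strSum (ξ := ξ) hx
  rw [hsum] at hle
  have h0 : stringM ξ x.1 x.2 = 0 := Multiset.le_zero.1 hle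
  have := top_mem_stringM (ξ := ξ) x.1 (h1 x hx)
  rw [h0] at this
  simp at this

theorem existsC (hξ0 : ξ ≠ 0) (hinf : ∀ n : ℕ, 0 < n → ξ ^ n ≠ 1) :
    ∀ (N : ℕ) (M : Multiset ℂ), M.card = N → (∀ c ∈ M, c ≠ 0) →
    ∃ S : Multiset (ℂ × ℕ), (∀ x ∈ S, x.1 ≠ 0) ∧ (∀ x ∈ S, 1 ≤ x.2) ∧
      (∀ x ∈ S, ∀ y ∈ S, pairGood ξ x y) ∧ strSum ξ S = M := by
  intro N
  induction N using Nat.strong_induction_on with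
  | _ N IH =>
    intro M hcard hM0
    rcases eq_or_ne M 0 with rfl | hM
    · exact ⟨0, by simp, by simp, by simp, by simp [strSum]⟩
    classical
    obtain ⟨c, hc⟩ := Multiset.exists_mem_of_ne_zero hM
    have hc0 : c ≠ 0 := hM0 c hc
    set P : ℂ → Prop := InCoset ξ c with hP
    set N₁ := M.filter P with hN₁
    set M₂ := M.filter (fun z => ¬ P z) with hM₂
    have hsplit : N₁ + M₂ = M := Multiset.filter_add_not P M
    have hcN₁ : c ∈ N₁ := Multiset.mem_filter.2 ⟨hc, InCoset_self hξ0 c⟩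
    -- exponents
    set ν : ℂ → ℤ := fun x => if h : P x then h.choose else 0 with hνdef
    have hν : ∀ x, P x → x = c * ξ ^ (2 * ν x) := by
      intro x hx
      simp only [hνdef, dif_pos hx]
      exact hx.choose_spec
    set E := N₁.map ν with hE
    obtain ⟨T, hT1, hTg, hTsum⟩ := existsZ E.card E rfl
    set g : ℤ → ℂ := fun k => c * ξ ^ (2 * k) with hg
    set S₁ := T.map (psi ξ c) with hS₁
    have hS₁sum : strSum ξ S₁ = N₁ := by
      rw [strSum, hS₁, Multiset.map_map]
      have e1 : (T.map fun t => stringM ξ (psi ξ c t).1 (psi ξ c t).2).sum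
          = (T.map fun t => (ivl t).map g).sum := by
        congr 1
        exact Multiset.map_congr rfl fun t _ => stringM_psi hξ0 c t
      rw [show (Multiset.map ((fun x : ℂ × ℕ => stringM ξ x.1 x.2) ∘ psi ξ c) T)
          = T.map fun t => stringM ξ (psi ξ c t).1 (psi ξ c t).2 from rfl, e1,
        ← sum_map_map T ivl g, hTsum, hE, Multiset.map_map]
      calc (N₁.map (g ∘ ν)) = N₁.map id := Multiset.map_congr rfl fun x hx => by
            have hPx : P x := (Multiset.mem_filter.1 hx).2
            exact (hν x hPx).symm
        _ = N₁ := Multiset.map_id N₁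
    have hcard₂ : M₂.card < N := by
      have h1 := congrArg Multiset.card hsplit
      rw [Multiset.card_add] at h1
      have h2 : 1 ≤ N₁.card := Multiset.card_pos.2 (fun h => by rw [h] at hcN₁; simp at hcN₁)
      omega
    obtain ⟨S₂, hS₂0, hS₂1, hS₂g, hS₂sum⟩ := IH M₂.card hcard₂ M₂ rfl
      (fun z hz => hM0 z (Multiset.mem_of_mem_filter hz))
    have hS₁0 : ∀ x ∈ S₁, x.1 ≠ 0 := by
      rintro x hx
      obtain ⟨t, _, rfl⟩ := Multiset.mem_map.1 hx
      exact mul_ne_zero hc0 (zpow_ne_zero _ hξ0)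
    have hS₁1 : ∀ x ∈ S₁, 1 ≤ x.2 := by
      rintro x hx
      obtain ⟨t, ht, rfl⟩ := Multiset.mem_map.1 hx
      exact hT1 t ht
    have hS₁top : ∀ x ∈ S₁, InCoset ξ c (top ξ x) := by
      rintro x hx
      obtain ⟨t, _, rfl⟩ := Multiset.mem_map.1 hx
      rw [top_psi hξ0]
      exact ⟨t.1, rfl⟩
    have hS₂top : ∀ y ∈ S₂, ¬ InCoset ξ c (top ξ y) := by
      intro y hy
      have hmem : top ξ y ∈ M₂ := by
        rw [← hS₂sum]
        exact Multiset.mem_of_le (stringM_le_strSum hy) (top_mem_stringM y.1 (hS₂1 y hy))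
      exact (Multiset.mem_filter.1 hmem).2
    refine ⟨S₁ + S₂, ?_, ?_, ?_, by rw [strSum_add, hS₁sum, hS₂sum, hsplit]⟩
    · intro x hx
      rcases Multiset.mem_add.1 hx with hx | hx
      exacts [hS₁0 x hx, hS₂0 x hx]
    · intro x hx
      rcases Multiset.mem_add.1 hx with hx | hx
      exacts [hS₁1 x hx, hS₂1 x hx]
    · intro x hx y hy
      rcases Multiset.mem_add.1 hx with hx | hx <;> rcases Multiset.mem_add.1 hy with hy | hy
      · obtain ⟨t, ht, rfl⟩ := Multiset.mem_map.1 hx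
        obtain ⟨t', ht', rfl⟩ := Multiset.mem_map.1 hy
        exact (pairGood_psi_iff hξ0 hinf hc0 t t').2 (hTg t ht t' ht')
      · exact cross_pairGood hξ0 (hS₁top x hx) (hS₂top y hy) (hS₂0 y hy)
      · exact pairGood_symm (hS₁0 y hy) (hS₂0 x hx)
          (cross_pairGood hξ0 (hS₁top y hy) (hS₂top x hx) (hS₂0 x hx))
      · exact hS₂g x hx y hy

end C3

section C4
variable {ξ : ℂ}

lemma mem_strSum {z : ℂ} {S : Multiset (ℂ × ℕ)}
    (h : z ∈ strSum ξ S) : ∃ x ∈ S, z ∈ stringM ξ x.1 x.2 := by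
  rw [strSum] at h
  induction S using Multiset.induction with
  | empty => simp [strSum] at h
  | cons a s ih =>
    simp only [Multiset.map_cons, Multiset.sum_cons, Multiset.mem_add] at h
    rcases h with h | h
    · exact ⟨a, Multiset.mem_cons_self a s, h⟩
    · obtain ⟨x, hx, hz⟩ := ih h
      exact ⟨x, Multiset.mem_cons_of_mem hx, hz⟩

lemma strSum_ne_zero {z : ℂ} {S : Multiset (ℂ × ℕ)} (hξ0 : ξ ≠ 0)
    (hS0 : ∀ x ∈ S, x.1 ≠ 0) (h : z ∈ strSum ξ S) : z ≠ 0 := by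
  obtain ⟨x, hx, hz⟩ := mem_strSum h
  obtain ⟨j, _, rfl⟩ := (mem_stringM_iff hξ0).1 hz
  exact mul_ne_zero (mul_ne_zero (hS0 x hx) (zpow_ne_zero _ hξ0)) (zpow_ne_zero _ hξ0)

lemma stringM_filter_not_pos (hξ0 : ξ ≠ 0) {c a : ℂ} {r : ℕ}
    [DecidablePred (fun z => ¬ InCoset ξ c z)]
    (h : InCoset ξ c (a * ξ ^ ((r : ℤ) - 1))) :
    (stringM ξ a r).filter (fun z => ¬ InCoset ξ c z) = 0 :=
  Multiset.filter_eq_nil.2 fun z hz hzc => hzc ((InCoset_of_mem_stringM hξ0 hz).2 h)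

lemma stringM_filter_not_neg (hξ0 : ξ ≠ 0) {c a : ℂ} {r : ℕ}
    [DecidablePred (fun z => ¬ InCoset ξ c z)]
    (h : ¬ InCoset ξ c (a * ξ ^ ((r : ℤ) - 1))) :
    (stringM ξ a r).filter (fun z => ¬ InCoset ξ c z) = stringM ξ a r :=
  Multiset.filter_eq_self.2 fun z hz hzc => h ((InCoset_of_mem_stringM hξ0 hz).1 hzc)

theorem uniqueC (hξ0 : ξ ≠ 0) (hinf : ∀ n : ℕ, 0 < n → ξ ^ n ≠ 1) :
    ∀ (N : ℕ) (M : Multiset ℂ), M.card = N →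
    ∀ S S' : Multiset (ℂ × ℕ),
    (∀ x ∈ S, x.1 ≠ 0) → (∀ x ∈ S, 1 ≤ x.2) →
    (∀ x ∈ S, ∀ y ∈ S, pairGood ξ x y) → strSum ξ S = M →
    (∀ x ∈ S', x.1 ≠ 0) → (∀ x ∈ S', 1 ≤ x.2) →
    (∀ x ∈ S', ∀ y ∈ S', pairGood ξ x y) → strSum ξ S' = M →
    S = S' := by
  intro N
  induction N using Nat.strong_induction_on with
  | _ N IH =>
    intro M hcard S S' hS0 hS1 hSg hSsum hS'0 hS'1 hS'g hS'sum
    rcases eq_or_ne M 0 with rfl | hM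
    · rw [strSum_eq_zero hS1 hSsum, strSum_eq_zero hS'1 hS'sum]
    classical
    obtain ⟨c, hc⟩ := Multiset.exists_mem_of_ne_zero hM
    have hc0 : c ≠ 0 := strSum_ne_zero hξ0 hS0 (by rw [hSsum]; exact hc)
    set P : ℂ → Prop := InCoset ξ c with hP
    set Q : ℂ × ℕ → Prop := fun x => InCoset ξ c (top ξ x) with hQ
    set N₁ := M.filter P with hN₁
    set M₂ := M.filter (fun z => ¬ P z) with hM₂
    have hsplit : N₁ + M₂ = M := Multiset.filter_add_not P M
    have hcN₁ : c ∈ N₁ := Multiset.mem_filter.2 ⟨hc, InCoset_self hξ0 c⟩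
    set ν : ℂ → ℤ := fun x => if h : P x then h.choose else 0 with hνdef
    have hν : ∀ x, P x → x = c * ξ ^ (2 * ν x) := by
      intro x hx
      simp only [hνdef, dif_pos hx]
      exact hx.choose_spec
    set g : ℤ → ℂ := fun k => c * ξ ^ (2 * k) with hg
    set φ : ℂ × ℕ → ℤ × ℕ := fun x => (ν (top ξ x), x.2) with hφ
    -- key: splitting any good decomposition along the coset of c
    have main : ∀ W : Multiset (ℂ × ℕ), (∀ x ∈ W, x.1 ≠ 0) → (∀ x ∈ W, 1 ≤ x.2) →
        (∀ x ∈ W, ∀ y ∈ W, pairGood ξ x y) → strSum ξ W = M →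
          W.filter Q = ((W.filter Q).map φ).map (psi ξ c) ∧
          (∀ x ∈ (W.filter Q).map φ, 1 ≤ x.2) ∧
          (∀ x ∈ (W.filter Q).map φ, ∀ y ∈ (W.filter Q).map φ, GoodZ x y) ∧
          (((W.filter Q).map φ).map ivl).sum.map g = N₁ ∧
          strSum ξ (W.filter (fun x => ¬ Q x)) = M₂ := by
      intro W hW0 hW1 hWg hWsum
      have hpsiphi : ∀ x ∈ W.filter Q, x = psi ξ c (φ x) := by
        intro x hx
        have hQx : Q x := (Multiset.mem_filter.1 hx).2
        exact psi_phi hξ0 (hν _ hQx)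
      have hid : W.filter Q = ((W.filter Q).map φ).map (psi ξ c) := by
        rw [Multiset.map_map]
        calc W.filter Q = (W.filter Q).map id := (Multiset.map_id _).symm
          _ = (W.filter Q).map (psi ξ c ∘ φ) :=
              Multiset.map_congr rfl fun x hx => hpsiphi x hx
      refine ⟨hid, ?_, ?_, ?_, ?_⟩
      · rintro x hx
        obtain ⟨y, hy, rfl⟩ := Multiset.mem_map.1 hx
        exact hW1 y (Multiset.mem_of_mem_filter hy)
      · rintro x hx y hy
        obtain ⟨u, hu, rfl⟩ := Multiset.mem_map.1 hx
        obtain ⟨v, hv, rfl⟩ := Multiset.mem_map.1 hy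
        refine (pairGood_psi_iff hξ0 hinf hc0 (φ u) (φ v)).1 ?_
        rw [← hpsiphi u hu, ← hpsiphi v hv]
        exact hWg u (Multiset.mem_of_mem_filter hu) v (Multiset.mem_of_mem_filter hv)
      · -- the integer intervals recover N₁
        have hstep : (((W.filter Q).map φ).map ivl).sum.map g
            = strSum ξ (W.filter Q) := by
          rw [Multiset.map_map, sum_map_map]
          rw [strSum]
          congr 1
          refine Multiset.map_congr rfl fun x hx => ?_
          simp only [Function.comp_apply]
          rw [← stringM_psi hξ0 c (φ x), ← hpsiphi x hx]
        rw [hstep]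
        -- filtering the sum along the coset
        have hfil : (strSum ξ W).filter P = strSum ξ (W.filter Q) := by
          rw [strSum, filter_sum_map, strSum]
          have e1 : (W.map fun x => (stringM ξ x.1 x.2).filter P)
              = W.map fun x => if Q x then stringM ξ x.1 x.2 else 0 := by
            refine Multiset.map_congr rfl fun x _ => ?_
            by_cases h : Q x
            · rw [if_pos h]; exact stringM_filter_pos hξ0 h
            · rw [if_neg h]; exact stringM_filter_neg hξ0 h
          rw [e1, sum_map_ite]
        rw [← hfil, hWsum]
      · have hfil : (strSum ξ W).filter (fun z => ¬ P z)
            = strSum ξ (W.filter (fun x => ¬ Q x)) := by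
          rw [strSum, filter_sum_map, strSum]
          have e1 : (W.map fun x => (stringM ξ x.1 x.2).filter (fun z => ¬ P z))
              = W.map fun x => if ¬ Q x then stringM ξ x.1 x.2 else 0 := by
            refine Multiset.map_congr rfl fun x _ => ?_
            by_cases h : Q x
            · rw [if_neg (not_not.2 h)]; exact stringM_filter_not_pos hξ0 h
            · rw [if_pos h]; exact stringM_filter_not_neg hξ0 h
          rw [e1, sum_map_ite]
        rw [← hfil, hWsum]
    obtain ⟨hidS, hT1, hTg, hTgl, hS₂sum⟩ := main S hS0 hS1 hSg hSsum
    obtain ⟨hidS', hT1', hTg', hTgl', hS'₂sum⟩ := main S' hS'0 hS'1 hS'g hS'sum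
    -- integer uniqueness
    have hTeq : (S.filter Q).map φ = (S'.filter Q).map φ := by
      have hsum_eq : (((S.filter Q).map φ).map ivl).sum = (((S'.filter Q).map φ).map ivl).sum :=
        Multiset.map_injective (g_injective hξ0 hinf hc0) (by rw [hTgl, hTgl'])
      exact uniqueZ (((S.filter Q).map φ).map ivl).sum.card _ rfl _ _ hT1 hTg rfl hT1' hTg'
        hsum_eq.symm
    have h₁ : S.filter Q = S'.filter Q := by rw [hidS, hidS', hTeq]
    -- complement: induction
    have hcard₂ : M₂.card < N := by
      have h1 := congrArg Multiset.card hsplit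
      rw [Multiset.card_add] at h1
      have h2 : 1 ≤ N₁.card := Multiset.card_pos.2 (fun h => by rw [h] at hcN₁; simp at hcN₁)
      omega
    have h₂ : S.filter (fun x => ¬ Q x) = S'.filter (fun x => ¬ Q x) := by
      refine IH M₂.card hcard₂ M₂ rfl _ _ ?_ ?_ ?_ hS₂sum ?_ ?_ ?_ hS'₂sum
      · exact fun x hx => hS0 x (Multiset.mem_of_mem_filter hx)
      · exact fun x hx => hS1 x (Multiset.mem_of_mem_filter hx)
      · exact fun x hx y hy => hSg x (Multiset.mem_of_mem_filter hx) y (Multiset.mem_of_mem_filter hy)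
      · exact fun x hx => hS'0 x (Multiset.mem_of_mem_filter hx)
      · exact fun x hx => hS'1 x (Multiset.mem_of_mem_filter hx)
      · exact fun x hx y hy => hS'g x (Multiset.mem_of_mem_filter hx) y (Multiset.mem_of_mem_filter hy)
    calc S = S.filter Q + S.filter (fun x => ¬ Q x) := (Multiset.filter_add_not Q S).symm
      _ = S'.filter Q + S'.filter (fun x => ¬ Q x) := by rw [h₁, h₂]
      _ = S' := Multiset.filter_add_not Q S'

end C4

/-! ## Polynomial level -/

section Poly
open Polynomial
variable {ξ : ℂ}

/-- the polynomial with constant term 1 whose inverse roots are `M` -/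
noncomputable def PM (M : Multiset ℂ) : Polynomial ℂ :=
  (M.map (fun c => 1 - C c * X)).prod

lemma fac_eq (c : ℂ) (hc : c ≠ 0) : 1 - C c * X = C (-c) * (X - C c⁻¹) := by
  have h1 : (-c) * c⁻¹ = -1 := by field_simp
  rw [mul_sub, ← C_mul, h1, map_neg, map_neg, map_one]
  ring

lemma fac_ne_zero (c : ℂ) : 1 - C c * X ≠ 0 := fun h => by
  have h1 : (1 - C c * X).eval 0 = 1 := by simp
  rw [h] at h1
  simp at h1

lemma PM_roots {M : Multiset ℂ} (hM : ∀ c ∈ M, c ≠ 0) :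
    (PM M).roots = M.map (·⁻¹) := by
  rw [PM, Polynomial.roots_multiset_prod _ (by
    rw [Multiset.mem_map]
    rintro ⟨c, hc, h⟩
    exact fac_ne_zero c h)]
  rw [Multiset.bind_map]
  have : ∀ c ∈ M, (1 - C c * X).roots = {c⁻¹} := by
    intro c hc
    rw [fac_eq c (hM c hc), Polynomial.roots_C_mul _ (neg_ne_zero.2 (hM c hc)),
      Polynomial.roots_X_sub_C]
  calc M.bind (fun c => (1 - C c * X).roots) = M.bind (fun c => {c⁻¹}) :=
        Multiset.bind_congr this
    _ = M.map (·⁻¹) := by simp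

lemma PM_injective {M M' : Multiset ℂ} (hM : ∀ c ∈ M, c ≠ 0) (hM' : ∀ c ∈ M', c ≠ 0)
    (h : PM M = PM M') : M = M' := by
  have := congrArg Polynomial.roots h
  rw [PM_roots hM, PM_roots hM'] at this
  exact Multiset.map_injective inv_injective this

lemma exists_PM {f : Polynomial ℂ} (hf : f.eval 0 = 1) :
    ∃ M : Multiset ℂ, (∀ c ∈ M, c ≠ 0) ∧ f = PM M := by
  have hf0 : f ≠ 0 := fun h => by rw [h] at hf; simp at hf
  have heq := Splits.eq_prod_roots (IsAlgClosed.splits f)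
  have hroots0 : ∀ z ∈ f.roots, z ≠ 0 := by
    intro z hz h0
    have := Polynomial.isRoot_of_mem_roots hz
    rw [h0] at this
    rw [Polynomial.IsRoot] at this
    rw [this] at hf
    simp at hf
  refine ⟨f.roots.map (·⁻¹), by
    rintro c hc
    obtain ⟨z, hz, rfl⟩ := Multiset.mem_map.1 hc
    exact inv_ne_zero (hroots0 z hz), ?_⟩
  -- evaluate the factorization at 0
  have heval : f.leadingCoeff * (f.roots.map (fun z => -z)).prod = 1 := by
    have h0 := congrArg (Polynomial.eval 0) heq
    rw [hf, Polynomial.eval_mul, Polynomial.eval_C, Polynomial.eval_multiset_prod,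
      Multiset.map_map] at h0
    have h1 : (f.roots.map (eval 0 ∘ fun a => X - C a)) = f.roots.map (fun z => -z) :=
      Multiset.map_congr rfl (fun z _ => by simp)
    rw [h1] at h0
    exact h0.symm
  have hlc : ((f.roots.map (fun z => -z)).prod)⁻¹ = f.leadingCoeff :=
    inv_eq_of_mul_eq_one_left heval
  rw [PM, Multiset.map_map]
  have e1 : (f.roots.map fun z => 1 - C z⁻¹ * X) =
      f.roots.map fun z => C (-z⁻¹) * (X - C z) := by
    refine Multiset.map_congr rfl fun z hz => ?_
    rw [fac_eq _ (inv_ne_zero (hroots0 z hz)), inv_inv]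
  have e2 : ((f.roots.map fun z => C (-z⁻¹)).prod) = C f.leadingCoeff := by
    rw [show (f.roots.map fun z => C (-z⁻¹)) = (f.roots.map fun z => -z⁻¹).map C by
      rw [Multiset.map_map]; rfl]
    rw [← map_multiset_prod (C : ℂ →+* ℂ[X])]
    congr 1
    rw [← hlc, show (f.roots.map fun z => -z⁻¹) = (f.roots.map fun z => -z).map Inv.inv by
      rw [Multiset.map_map]; refine Multiset.map_congr rfl fun z _ => ?_
      simp only [Function.comp_apply]
      rw [inv_neg]]
    exact Multiset.prod_map_inv' _
  have e0 : (f.roots.map ((fun c => 1 - C c * X) ∘ fun x => x⁻¹))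
      = f.roots.map fun z => 1 - C z⁻¹ * X := rfl
  rw [e0, e1, Multiset.prod_map_mul, e2]
  exact heq

lemma qString_eq (ξ a : ℂ) (r : ℕ) :
    qString ξ a r = ((stringM ξ a r).map (fun c => 1 - C c * X)).prod := by
  rw [qString, stringM, Multiset.map_map, Finset.prod_eq_multiset_prod, Finset.range_val]
  rfl

lemma PM_strSum (S : Multiset (ℂ × ℕ)) :
    PM (strSum ξ S) = (S.map fun x => qString ξ x.1 x.2).prod := by
  rw [PM, strSum, sum_map_map, prod_sum_map]
  congr 1
  refine Multiset.map_congr rfl fun x _ => ?_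
  rw [qString_eq]

end Poly

/-! ## from permutations of lists to equivs -/

lemma permEquiv {α : Type*} {l₁ l₂ : List α} (h : l₁.Perm l₂) :
    ∃ σ : Fin l₁.length ≃ Fin l₂.length, ∀ i, l₁.get i = l₂.get (σ i) := by
  induction h with
  | nil => exact ⟨Equiv.refl _, fun i => i.elim0⟩
  | cons x h ih =>
    obtain ⟨σ, hσ⟩ := ih
    refine ⟨(finSuccEquiv _).trans ((σ.optionCongr).trans (finSuccEquiv _).symm), fun i => ?_⟩
    induction i using Fin.cases with
    | zero => simp
    | succ i =>
      simp only [Equiv.trans_apply, finSuccEquiv_succ, Equiv.optionCongr_apply,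
        Option.map_some, finSuccEquiv_symm_some, List.get_cons_succ]
      exact hσ i
  | swap x y l =>
    have h0 : (0 : ℕ) < (y :: x :: l).length := by simp
    have h1 : (1 : ℕ) < (y :: x :: l).length := by simp
    refine ⟨Equiv.swap ⟨0, h0⟩ ⟨1, h1⟩, fun i => ?_⟩
    rcases i with ⟨iv, hi⟩
    rcases iv with _ | (_ | v)
    · have hs : (Equiv.swap (⟨0, h0⟩ : Fin _) ⟨1, h1⟩) ⟨0, hi⟩ = ⟨1, h1⟩ :=
        Equiv.swap_apply_left _ _
      exact ((congrArg (x :: y :: l).get hs).trans rfl).symm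
    · have hs : (Equiv.swap (⟨0, h0⟩ : Fin _) ⟨1, h1⟩) ⟨1, hi⟩ = ⟨0, h0⟩ :=
        Equiv.swap_apply_right _ _
      exact ((congrArg (x :: y :: l).get hs).trans rfl).symm
    · have hs : (Equiv.swap (⟨0, h0⟩ : Fin _) ⟨1, h1⟩) ⟨v + 2, hi⟩ = ⟨v + 2, hi⟩ :=
        Equiv.swap_apply_of_ne_of_ne (by simp [Fin.ext_iff]) (by simp [Fin.ext_iff])
      exact ((congrArg (x :: y :: l).get hs).trans rfl).symm
  | trans h₁ h₂ ih₁ ih₂ =>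
    obtain ⟨σ₁, hσ₁⟩ := ih₁
    obtain ⟨σ₂, hσ₂⟩ := ih₂
    exact ⟨σ₁.trans σ₂, fun i => by rw [hσ₁ i, hσ₂ (σ₁ i)]; rfl⟩


/-! ## glue: Fin tuples vs multisets -/

section Glue
open Polynomial
variable {ξ : ℂ}

lemma tupleMultiset_prod (m : ℕ) (aa : Fin m → ℂ) (rr : Fin m → ℕ) :
    ((((List.finRange m).map fun k => (aa k, rr k)) : Multiset (ℂ × ℕ)).map
        fun x => qString ξ x.1 x.2).prod = ∏ k, qString ξ (aa k) (rr k) := by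
  rw [Fin.prod_univ_def, Multiset.map_coe, Multiset.prod_coe, List.map_map]
  rfl

lemma toList_prod (S : Multiset (ℂ × ℕ)) :
    (∏ k : Fin S.toList.length, qString ξ (S.toList.get k).1 (S.toList.get k).2)
      = (S.map fun x => qString ξ x.1 x.2).prod := by
  rw [← tupleMultiset_prod S.toList.length (fun k => (S.toList.get k).1)
    (fun k => (S.toList.get k).2)]
  congr 1
  have h1 : ((List.finRange S.toList.length).map fun k => ((S.toList.get k).1, (S.toList.get k).2))
      = (List.finRange S.toList.length).map S.toList.get := by
    refine List.map_congr_left fun k _ => ?_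
    rfl
  rw [h1, List.map_get_finRange, Multiset.coe_toList]

lemma mem_toList_get (S : Multiset (ℂ × ℕ)) (k : Fin S.toList.length) :
    S.toList.get k ∈ S := by
  have : S.toList.get k ∈ S.toList := S.toList.get_mem k
  exact Multiset.mem_toList.1 this

lemma tuple_mem {m : ℕ} (aa : Fin m → ℂ) (rr : Fin m → ℕ) {x : ℂ × ℕ}
    (hx : x ∈ (((List.finRange m).map fun k => (aa k, rr k)) : Multiset (ℂ × ℕ))) :
    ∃ k, x = (aa k, rr k) := by
  rw [Multiset.mem_coe, List.mem_map] at hx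
  obtain ⟨k, _, rfl⟩ := hx
  exact ⟨k, rfl⟩

end Glue

end QStringAux


open QStringAux in
/-- For `ξ` of infinite multiplicative order, every `f ∈ ℂ[u]` with `f(0) = 1` has a
`ξ`-factorization `f = ∏_k f_{a_k, r_k}` with nonzero `a_k`, `r_k ≥ 1`, satisfying the
non-resonance condition, and this factorization is unique up to permutation. -/
theorem stmt6 (ξ : ℂ) (hξ0 : ξ ≠ 0) (hinf : ∀ n : ℕ, 0 < n → ξ ^ n ≠ 1)
    (f : Polynomial ℂ) (hf : f.eval 0 = 1) :
    ∃ (m : ℕ) (a : Fin m → ℂ) (r : Fin m → ℕ),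
      (∀ k, a k ≠ 0) ∧ (∀ k, 1 ≤ r k) ∧ f = ∏ k, qString ξ (a k) (r k) ∧
      NonResonant ξ a r ∧
      ∀ (m' : ℕ) (a' : Fin m' → ℂ) (r' : Fin m' → ℕ),
        (∀ k, a' k ≠ 0) → (∀ k, 1 ≤ r' k) → f = ∏ k, qString ξ (a' k) (r' k) →
        NonResonant ξ a' r' →
        ∃ σ : Fin m' ≃ Fin m, (∀ k, a' k = a (σ k)) ∧ ∀ k, r' k = r (σ k) := by
  classical
  obtain ⟨M, hM0, hfM⟩ := exists_PM hf
  obtain ⟨S, hS0, hS1, hSg, hSsum⟩ := existsC hξ0 hinf M.card M rfl hM0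
  refine ⟨S.toList.length, fun k => (S.toList.get k).1, fun k => (S.toList.get k).2,
    ?_, ?_, ?_, ?_, ?_⟩
  · exact fun k => hS0 _ (mem_toList_get S k)
  · exact fun k => hS1 _ (mem_toList_get S k)
  · rw [toList_prod, ← PM_strSum, hSsum]
    exact hfM
  · intro k j _ p hp
    exact hSg _ (mem_toList_get S k) _ (mem_toList_get S j) p hp
  · intro m' a' r' ha' hr' hfeq hNR
    set l' : List (ℂ × ℕ) := (List.finRange m').map (fun k => (a' k, r' k)) with hl'
    set S' : Multiset (ℂ × ℕ) := (l' : Multiset (ℂ × ℕ)) with hS'def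
    have hS'0 : ∀ x ∈ S', x.1 ≠ 0 := by
      intro x hx
      obtain ⟨k, rfl⟩ := tuple_mem a' r' hx
      exact ha' k
    have hS'1 : ∀ x ∈ S', 1 ≤ x.2 := by
      intro x hx
      obtain ⟨k, rfl⟩ := tuple_mem a' r' hx
      exact hr' k
    have hS'g : ∀ x ∈ S', ∀ y ∈ S', pairGood ξ x y := by
      intro x hx y hy
      obtain ⟨k, rfl⟩ := tuple_mem a' r' hx
      obtain ⟨j, rfl⟩ := tuple_mem a' r' hy
      by_cases hkj : k = j
      · subst hkj
        exact pairGood_self hξ0 hinf (ha' k)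
      · exact fun p hp => hNR k j hkj p hp
    have hS'sum : strSum ξ S' = M := by
      refine PM_injective (fun z hz => strSum_ne_zero hξ0 hS'0 hz) hM0 ?_
      rw [PM_strSum, hS'def, tupleMultiset_prod m' a' r', ← hfeq]
      exact hfM
    have hSS : S' = S :=
      uniqueC hξ0 hinf M.card M rfl S' S hS'0 hS'1 hS'g hS'sum hS0 hS1 hSg hSsum
    have hperm : l'.Perm S.toList := by
      rw [← Multiset.coe_eq_coe, Multiset.coe_toList]
      exact hSS
    obtain ⟨σ₀, hσ₀⟩ := permEquiv hperm
    have hlen : m' = l'.length := by simp [hl']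
    have hget : ∀ k : Fin m', l'.get (finCongr hlen k) = (a' k, r' k) := by
      intro k
      simp [hl', List.get_eq_getElem]
    refine ⟨(finCongr hlen).trans σ₀, fun k => ?_, fun k => ?_⟩
    · have h2 := hσ₀ (finCongr hlen k)
      rw [hget k] at h2
      exact congrArg Prod.fst h2
    · have h2 := hσ₀ (finCongr hlen k)
      rw [hget k] at h2
      exact congrArg Prod.snd h2
end

section
/- Fix l ∈ ℤ_{≥1} and let φ_l : ℂ[u] → ℂ[u] be the ℂ-algebra homomorphism with φ_l(u) = u^l. Then every polynomial f ∈ ℂ[u] with f(0) = 1 admits a unique factorization f = f' · φ_l(f'') where f', f'' ∈ ℂ[u] both have constant term 1 and f' is not divisible by 1 − a u^l for any a ∈ ℂ^×. -/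
open Polynomial

private lemma coprime_of_no_common_root (p q : ℂ[X]) (hp : p ≠ 0) (hq : q ≠ 0)
    (h : ∀ z : ℂ, p.eval z = 0 → q.eval z ≠ 0) : IsCoprime p q := by
  classical
  rw [← EuclideanDomain.gcd_isUnit_iff]
  by_contra hu
  have hg0 : EuclideanDomain.gcd p q ≠ 0 := by
    rw [Ne, EuclideanDomain.gcd_eq_zero_iff]
    rintro ⟨h1, -⟩; exact hp h1
  have hdeg : 0 < (EuclideanDomain.gcd p q).degree :=
    degree_pos_of_ne_zero_of_nonunit hg0 hu
  obtain ⟨z, hz⟩ := Complex.exists_root hdeg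
  have hzp : p.eval z = 0 :=
    eval_eq_zero_of_dvd_of_eval_eq_zero (EuclideanDomain.gcd_dvd_left p q) hz
  have hzq : q.eval z = 0 :=
    eval_eq_zero_of_dvd_of_eval_eq_zero (EuclideanDomain.gcd_dvd_right p q) hz
  exact h z hzp hzq

private lemma natDeg_one_sub (l : ℕ) (hl : 1 ≤ l) (a : ℂ) (ha : a ≠ 0) :
    (1 - C a * X ^ l : ℂ[X]).natDegree = l := by
  rw [show (1 - C a * X ^ l : ℂ[X]) = -(C a * X ^ l - 1) by ring, natDegree_neg,
    natDegree_sub_eq_left_of_natDegree_lt, natDegree_C_mul_X_pow l a ha]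
  rw [natDegree_C_mul_X_pow l a ha, natDegree_one]
  omega

private lemma factor_lin (r : ℂ) (hr : r ≠ 0) (p : ℂ[X]) (hp : p.eval r = 0) :
    ∃ q : ℂ[X], p = (1 - C r⁻¹ * X) * q := by
  obtain ⟨c, hc⟩ := dvd_iff_isRoot.2 hp
  refine ⟨-C r * c, ?_⟩
  have h1 : C r⁻¹ * C r = 1 := by rw [← C_mul, inv_mul_cancel₀ hr, C_1]
  rw [hc]
  linear_combination (-(X * c) : ℂ[X]) * h1

/-- key lemma: if `1 - a X^l` divides `h1 * h2.comp (X^l)` and `h1` is not divisible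
by any `1 - b X^l`, then `a⁻¹` is a root of `h2`. -/
private lemma key (l : ℕ) (hl : 1 ≤ l) (a : ℂ) (ha : a ≠ 0) (h1 h2 : ℂ[X])
    (hcond : ∀ b : ℂ, b ≠ 0 → ¬ (1 - C b * X ^ l ∣ h1))
    (hφ : (h2.comp (X ^ l)).eval 0 = 1)
    (hdvd : (1 - C a * X ^ l) ∣ h1 * h2.comp (X ^ l)) :
    h2.eval a⁻¹ = 0 := by
  by_contra hne
  have hs0 : (1 - C a * X ^ l : ℂ[X]) ≠ 0 := fun h => by
    have := congrArg (eval 0) h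
    simp [zero_pow (by omega : l ≠ 0)] at this
  have hq0 : h2.comp (X ^ l) ≠ 0 := fun h => by rw [h] at hφ; simp at hφ
  have hcop : IsCoprime (1 - C a * X ^ l : ℂ[X]) (h2.comp (X ^ l)) := by
    apply coprime_of_no_common_root _ _ hs0 hq0
    intro z hz
    have hzl : z ^ l = a⁻¹ := by
      simp only [eval_sub, eval_one, eval_mul, eval_C, eval_pow, eval_X] at hz
      field_simp
      linear_combination -hz
    rw [eval_comp, eval_pow, eval_X, hzl]
    exact hne
  exact hcond a ha (hcop.dvd_of_dvd_mul_right hdvd)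

private lemma exist_fac (l : ℕ) (hl : 1 ≤ l) :
    ∀ n : ℕ, ∀ f : ℂ[X], f.natDegree ≤ n → f.eval 0 = 1 →
      ∃ g1 g2 : ℂ[X], g1.eval 0 = 1 ∧ g2.eval 0 = 1 ∧
        (∀ a : ℂ, a ≠ 0 → ¬ (1 - C a * X ^ l ∣ g1)) ∧ f = g1 * g2.comp (X ^ l) := by
  intro n
  induction n with
  | zero =>
    intro f hn hf
    refine ⟨f, 1, hf, by simp, ?_, by simp⟩
    intro a ha hdvd
    obtain ⟨g, hg⟩ := hdvd
    have hf0 : f ≠ 0 := fun h => by rw [h] at hf; simp at hf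
    have hg0 : g ≠ 0 := fun h => by rw [h, mul_zero] at hg; exact hf0 hg
    have hs0 : (1 - C a * X ^ l : ℂ[X]) ≠ 0 := fun h => by
      have := congrArg (eval 0) h
      simp [zero_pow (by omega : l ≠ 0)] at this
    have := natDegree_mul hs0 hg0
    rw [← hg, natDeg_one_sub l hl a ha] at this
    omega
  | succ n ih =>
    intro f hn hf
    by_cases hx : ∃ a : ℂ, a ≠ 0 ∧ (1 - C a * X ^ l ∣ f)
    · obtain ⟨a, ha, g, hg⟩ := hx
      have hf0 : f ≠ 0 := fun h => by rw [h] at hf; simp at hf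
      have hg0 : g ≠ 0 := fun h => by rw [h, mul_zero] at hg; exact hf0 hg
      have hs0 : (1 - C a * X ^ l : ℂ[X]) ≠ 0 := fun h => by
        have := congrArg (eval 0) h
        simp [zero_pow (by omega : l ≠ 0)] at this
      have hdeg := natDegree_mul hs0 hg0
      rw [← hg, natDeg_one_sub l hl a ha] at hdeg
      have hge : g.eval 0 = 1 := by
        have := congrArg (eval 0) hg
        simpa [zero_pow (by omega : l ≠ 0), hf] using this.symm
      obtain ⟨g1, g2, hg1e, hg2e, hg1c, hgf⟩ := ih g (by omega) hge
      refine ⟨g1, (1 - C a * X) * g2, hg1e, by simp [hg2e], hg1c, ?_⟩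
      rw [hg, hgf]
      simp only [mul_comp, sub_comp, one_comp, C_comp, X_comp]
      ring
    · push_neg at hx
      exact ⟨f, 1, hf, by simp, fun a ha => hx a ha, by simp⟩

private lemma uniq_fac (l : ℕ) (hl : 1 ≤ l) :
    ∀ n : ℕ, ∀ g2 : ℂ[X], g2.natDegree ≤ n →
      ∀ g1 h1 h2 : ℂ[X],
        g1.eval 0 = 1 → g2.eval 0 = 1 →
        (∀ a : ℂ, a ≠ 0 → ¬ (1 - C a * X ^ l ∣ g1)) →
        h1.eval 0 = 1 → h2.eval 0 = 1 →
        (∀ a : ℂ, a ≠ 0 → ¬ (1 - C a * X ^ l ∣ h1)) →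
        g1 * g2.comp (X ^ l) = h1 * h2.comp (X ^ l) →
        g1 = h1 ∧ g2 = h2 := by
  intro n
  induction n with
  | zero =>
    intro g2 hn g1 h1 h2 hg1e hg2e hg1c hh1e hh2e hh1c heq
    have hg2 : g2 = 1 := by
      have := eq_C_of_natDegree_le_zero hn
      rw [this] at hg2e ⊢
      simp at hg2e
      rw [hg2e, C_1]
    subst hg2
    rw [one_comp, mul_one] at heq
    have hφe : (h2.comp (X ^ l)).eval 0 = 1 := by
      rw [eval_comp]
      simp [zero_pow (by omega : l ≠ 0), hh2e]
    have hh2 : h2 = 1 := by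
      by_contra hne
      have hdeg : 0 < h2.degree := by
        rcases Nat.eq_zero_or_pos h2.natDegree with h | h
        · exact absurd (by
            have := eq_C_of_natDegree_le_zero h.le
            rw [this] at hh2e ⊢; simp at hh2e; rw [hh2e, C_1]) hne
        · exact natDegree_pos_iff_degree_pos.mp h
      obtain ⟨r, hr⟩ := Complex.exists_root hdeg
      have hr0 : r ≠ 0 := fun h => by rw [h] at hr; exact one_ne_zero (hr ▸ hh2e.symm)
      obtain ⟨q, hq⟩ := factor_lin r hr0 h2 hr
      have hdvd : (1 - C r⁻¹ * X ^ l) ∣ g1 := by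
        rw [heq, hq]
        simp only [mul_comp, sub_comp, one_comp, C_comp, X_comp]
        exact Dvd.dvd.mul_left (Dvd.dvd.mul_right (dvd_refl _) _) h1
      exact hg1c r⁻¹ (inv_ne_zero hr0) hdvd
    subst hh2
    rw [one_comp, mul_one] at heq
    exact ⟨heq, rfl⟩
  | succ n ih =>
    intro g2 hn g1 h1 h2 hg1e hg2e hg1c hh1e hh2e hh1c heq
    rcases Nat.eq_zero_or_pos g2.natDegree with hz | hpos
    · exact ih g2 (by omega) g1 h1 h2 hg1e hg2e hg1c hh1e hh2e hh1c heq
    · -- g2 has a root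
      obtain ⟨r, hr⟩ := Complex.exists_root (natDegree_pos_iff_degree_pos.mp hpos)
      have hr0 : r ≠ 0 := fun h => by rw [h] at hr; exact one_ne_zero (hr ▸ hg2e.symm)
      set a := r⁻¹ with ha_def
      have ha : a ≠ 0 := inv_ne_zero hr0
      obtain ⟨qg, hqg⟩ := factor_lin r hr0 g2 hr
      have hφh : (h2.comp (X ^ l)).eval 0 = 1 := by
        rw [eval_comp]; simp [zero_pow (by omega : l ≠ 0), hh2e]
      have hφg : (g2.comp (X ^ l)).eval 0 = 1 := by
        rw [eval_comp]; simp [zero_pow (by omega : l ≠ 0), hg2e]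
      -- 1 - C a X^l divides h1 * φ h2
      have hsg : g2.comp (X ^ l) = (1 - C a * X ^ l) * qg.comp (X ^ l) := by
        rw [hqg]; simp only [mul_comp, sub_comp, one_comp, C_comp, X_comp]; rfl
      have hdvd : (1 - C a * X ^ l) ∣ h1 * h2.comp (X ^ l) := by
        rw [← heq, hsg]
        exact Dvd.dvd.mul_left (Dvd.dvd.mul_right (dvd_refl _) _) g1
      have hroot : h2.eval r = 0 := by
        have := key l hl a ha h1 h2 hh1c hφh hdvd
        rwa [ha_def, inv_inv] at this
      obtain ⟨qh, hqh⟩ := factor_lin r hr0 h2 hroot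
      have hsh : h2.comp (X ^ l) = (1 - C a * X ^ l) * qh.comp (X ^ l) := by
        rw [hqh]; simp only [mul_comp, sub_comp, one_comp, C_comp, X_comp]; rfl
      have hs0 : (1 - C a * X ^ l : ℂ[X]) ≠ 0 := fun h => by
        have := congrArg (eval 0) h
        simp [zero_pow (by omega : l ≠ 0)] at this
      -- cancel
      have heq' : g1 * qg.comp (X ^ l) = h1 * qh.comp (X ^ l) := by
        have : (1 - C a * X ^ l) * (g1 * qg.comp (X ^ l))
            = (1 - C a * X ^ l) * (h1 * qh.comp (X ^ l)) := by
          rw [show (1 - C a * X ^ l) * (g1 * qg.comp (X ^ l)) = g1 * ((1 - C a * X ^ l) * qg.comp (X ^ l)) by ring,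
            ← hsg, heq, hsh]; ring
        exact mul_left_cancel₀ hs0 this
      -- eval 0 of qg, qh
      have hqge : qg.eval 0 = 1 := by
        have := congrArg (eval 0) hqg
        simpa [hg2e] using this.symm
      have hqhe : qh.eval 0 = 1 := by
        have := congrArg (eval 0) hqh
        simpa [hh2e] using this.symm
      -- degree of qg
      have hqg0 : qg ≠ 0 := fun h => by rw [h] at hqge; simp at hqge
      have hlin0 : (1 - C a * X : ℂ[X]) ≠ 0 := fun h => by
        have := congrArg (eval 0) h; simp at this
      have hdqg : qg.natDegree ≤ n := by
        have h1' := natDegree_mul hlin0 hqg0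
        have h2' : (1 - C a * X : ℂ[X]).natDegree = 1 := by
          have := natDeg_one_sub 1 le_rfl a ha
          rwa [pow_one] at this
        rw [← hqg, h2'] at h1'
        omega
      obtain ⟨e1, e2⟩ := ih qg hdqg g1 h1 qh hg1e hqge hg1c hh1e hqhe hh1c heq'
      exact ⟨e1, by rw [hqg, hqh, e2]⟩

/-- Fix `l ≥ 1` and let `φ_l : ℂ[u] → ℂ[u]` be the substitution `u ↦ u^l` (so
`φ_l(g) = g.comp (X^l)`). Every `f ∈ ℂ[u]` with `f(0) = 1` factors uniquely as
`f = f' · φ_l(f'')` where `f'` and `f''` have constant term `1` and `f'` is not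
divisible by `1 - a u^l` for any `a ∈ ℂ^×`. -/
theorem stmt7 (l : ℕ) (hl : 1 ≤ l) (f : Polynomial ℂ) (hf : f.eval 0 = 1) :
    ∃! p : Polynomial ℂ × Polynomial ℂ,
      p.1.eval 0 = 1 ∧ p.2.eval 0 = 1 ∧
      (∀ a : ℂ, a ≠ 0 → ¬ (1 - C a * X ^ l ∣ p.1)) ∧
      f = p.1 * p.2.comp (X ^ l) := by
  obtain ⟨g1, g2, hg1e, hg2e, hg1c, hgf⟩ := exist_fac l hl f.natDegree f le_rfl hf
  refine ⟨(g1, g2), ⟨hg1e, hg2e, hg1c, hgf⟩, ?_⟩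
  rintro ⟨h1, h2⟩ ⟨hh1e, hh2e, hh1c, hhf⟩
  have := uniq_fac l hl h2.natDegree h2 le_rfl h1 g1 g2 hh1e hh2e hh1c hg1e hg2e hg1c
    (by rw [← hhf, ← hgf])
  exact Prod.ext this.1 this.2
end

section
/- Let ξ ∈ ℂ^× be of infinite multiplicative order and a_1, …, a_m ∈ ℂ^×. Then there exists a permutation σ of {1, …, m} such that a_{σ(j)} / a_{σ(k)} ≠ ξ^{−2} for all 1 ≤ j < k ≤ m. -/
/-- If `ξ ∈ ℂ^×` has infinite multiplicative order and `a_1, …, a_m ∈ ℂ^×`, then there is a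
permutation `σ` of `{1,…,m}` such that `a_{σ(j)} / a_{σ(k)} ≠ ξ^{-2}` for all `j < k`. -/
theorem stmt9 (ξ : ℂ) (hξ0 : ξ ≠ 0) (hinf : ∀ n : ℕ, 0 < n → ξ ^ n ≠ 1)
    (m : ℕ) (a : Fin m → ℂ) (ha : ∀ j, a j ≠ 0) :
    ∃ σ : Equiv.Perm (Fin m), ∀ j k : Fin m, j < k → a (σ j) / a (σ k) ≠ ξ ^ (-2 : ℤ) := by
  classical
  set R : Fin m → Fin m → Prop := fun i j => a i = ξ ^ (-2 : ℤ) * a j with hR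
  -- chains of R give powers of ξ
  have hchain : ∀ i j : Fin m, Relation.TransGen R i j →
      ∃ n : ℕ, 0 < n ∧ a i = ξ ^ (-2 * (n : ℤ)) * a j := by
    intro i j h
    induction h with
    | single h => exact ⟨1, one_pos, by simpa using (show a i = ξ ^ (-2 : ℤ) * a _ from h)⟩
    | tail _ h ih =>
      obtain ⟨n, hn, hin⟩ := ih
      refine ⟨n + 1, Nat.succ_pos _, ?_⟩
      rw [hin, h, ← mul_assoc, ← zpow_add₀ hξ0]
      congr 2
      push_cast
      ring
  -- acyclicity
  have hacyc : ∀ i : Fin m, ¬ Relation.TransGen R i i := by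
    intro i h
    obtain ⟨n, hn, hin⟩ := hchain i i h
    have hai := ha i
    have h1 : ξ ^ (-2 * (n : ℤ)) = 1 := by
      nth_rewrite 1 [← one_mul (a i)] at hin
      exact (mul_right_cancel₀ hai hin).symm
    have h2 : ξ ^ (2 * n) = 1 := by
      have h3 : ξ ^ (-((2 * n : ℕ) : ℤ)) = 1 := by
        rw [show (-((2 * n : ℕ) : ℤ)) = -2 * (n : ℤ) by push_cast; ring]
        exact h1
      rwa [zpow_neg, inv_eq_one, zpow_natCast] at h3
    exact hinf (2 * n) (by omega) h2
  -- height function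
  set f : Fin m → ℕ := fun i => (Finset.univ.filter (fun j => Relation.TransGen R i j)).card
    with hf
  have hlt : ∀ i j : Fin m, R i j → f j < f i := by
    intro i j h
    apply Finset.card_lt_card
    constructor
    · intro x hx
      simp only [Finset.mem_filter, Finset.mem_univ, true_and] at hx ⊢
      exact Relation.TransGen.head h hx
    · intro hsub
      have hj : j ∈ Finset.univ.filter (fun x => Relation.TransGen R i x) := by
        simp [Relation.TransGen.single h]
      have := hsub hj
      simp only [Finset.mem_filter, Finset.mem_univ, true_and] at this
      exact hacyc j this
  refine ⟨Tuple.sort f, ?_⟩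
  intro j k hjk hbad
  rw [div_eq_iff (ha _)] at hbad
  have hRjk : R ((Tuple.sort f) j) ((Tuple.sort f) k) := hbad
  have h1 := hlt _ _ hRjk
  have h2 : f ((Tuple.sort f) j) ≤ f ((Tuple.sort f) k) :=
    Tuple.monotone_sort f (le_of_lt hjk)
  omega
end

section
/- Let l ≥ 3 be an odd integer, ζ ∈ ℂ a primitive l-th root of unity, and a_1, …, a_m ∈ ℂ^×. Then there exists a permutation σ of {1, …, m} such that a_{σ(j)} / a_{σ(k)} ≠ ζ^{−2} for all j < k if and only if there is no b ∈ ℂ^× such that each of the numbers b, bζ, bζ², …, bζ^{l−1} occurs among a_1, …, a_m (with multiplicity; i.e., iff the polynomial ∏_{j=1}^m (1 − a_j u) is not divisible by 1 − b^l u^l for any b ∈ ℂ^×). -/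
open Polynomial

private lemma no_strictAnti' (f : ℕ → ℕ) (h : ∀ n, f (n + 1) < f n) : False := by
  have key : ∀ n, f n + n ≤ f 0 := by
    intro n
    induction n with
    | zero => omega
    | succ k ih => have := h k; omega
  have := key (f 0 + 1); omega

/-- The basic factorization `1 - b^l X^l = ∏_{i<l} (1 - b ζ^{l-i} X)`. -/
private lemma one_sub_pow_eq_prod (l : ℕ) (hl3 : 3 ≤ l) (hodd : Odd l) (ζ : ℂ)
    (hζ : IsPrimitiveRoot ζ l) (b : ℂ) (hb : b ≠ 0) :
    (1 : ℂ[X]) - C (b ^ l) * X ^ l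
      = ∏ i ∈ Finset.range l, (1 - C (b * ζ ^ (l - i)) * X) := by
  have hl0 : 0 < l := by omega
  have h1 : (X : ℂ[X]) ^ l - C (b⁻¹ ^ l) = ∏ i ∈ Finset.range l, (X - C (ζ ^ i * b⁻¹)) :=
    X_pow_sub_C_eq_prod hζ hl0 rfl
  have hfac : ∀ i ∈ Finset.range l,
      (1 : ℂ[X]) - C (b * ζ ^ (l - i)) * X
        = C (-(b * ζ ^ (l - i))) * (X - C (ζ ^ i * b⁻¹)) := by
    intro i hi
    rw [Finset.mem_range] at hi
    have hz : -(b * ζ ^ (l - i)) * (ζ ^ i * b⁻¹) = -1 := by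
      have h2 : b * ζ ^ (l - i) * (ζ ^ i * b⁻¹) = ζ ^ (l - i) * ζ ^ i * (b * b⁻¹) := by ring
      have h3 : ζ ^ (l - i) * ζ ^ i = 1 := by
        rw [← pow_add, Nat.sub_add_cancel hi.le]; exact hζ.pow_eq_one
      rw [neg_mul, h2, h3, mul_inv_cancel₀ hb, one_mul]
    rw [mul_sub, ← C_mul, hz]
    simp only [map_neg, map_mul, map_one]
    ring
  rw [Finset.prod_congr rfl hfac, Finset.prod_mul_distrib, ← map_prod, ← h1]
  have hconst : ∏ i ∈ Finset.range l, (-(b * ζ ^ (l - i))) = -(b ^ l) := by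
    have : ∀ i ∈ Finset.range l, (-(b * ζ ^ (l - i))) = (-b) * ζ ^ (l - i) := by
      intro i _; ring
    rw [Finset.prod_congr rfl this, Finset.prod_mul_distrib, Finset.prod_const,
      Finset.prod_pow_eq_pow_sum, Finset.card_range]
    obtain ⟨t, ht⟩ := id hodd
    have hsum : ∑ i ∈ Finset.range l, (l - i) = l * (t + 1) := by
      have h0 : ∀ i ∈ Finset.range l, l - i = (l - 1 - i) + 1 := by
        intro i hi; rw [Finset.mem_range] at hi; omega
      rw [Finset.sum_congr rfl h0, Finset.sum_add_distrib,
        Finset.sum_range_reflect (fun j => j) l, Finset.sum_const, Finset.card_range,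
        smul_eq_mul, mul_one]
      have h2 : (∑ i ∈ Finset.range l, i) * 2 = l * (l - 1) := Finset.sum_range_id_mul_two l
      have h4 : (∑ i ∈ Finset.range l, i) * 2 = (l * t) * 2 := by
        rw [h2, show l - 1 = 2 * t from by omega]; ring
      have h5 : (∑ i ∈ Finset.range l, i) = l * t :=
        Nat.eq_of_mul_eq_mul_right (by norm_num) h4
      rw [h5]; ring
    rw [hsum, pow_mul, hζ.pow_eq_one, one_pow, mul_one, hodd.neg_pow]
  rw [hconst]
  have hbl : (b : ℂ) ^ l * b⁻¹ ^ l = 1 := by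
    rw [← mul_pow, mul_inv_cancel₀ hb, one_pow]
  rw [map_neg, neg_mul, mul_sub, ← C_mul, hbl, map_one]
  ring

/-- Divisibility by `1 - b^l X^l` is equivalent to presence of the full `ζ`-orbit of `b`. -/
private lemma dvd_iff_orbit (l : ℕ) (hl3 : 3 ≤ l) (hodd : Odd l) (ζ : ℂ)
    (hζ : IsPrimitiveRoot ζ l) (m : ℕ) (a : Fin m → ℂ) (ha : ∀ j, a j ≠ 0) :
    (∃ b : ℂ, b ≠ 0 ∧ (1 - C (b ^ l) * X ^ l) ∣ ∏ j, (1 - C (a j) * X)) ↔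
      (∃ b : ℂ, b ≠ 0 ∧ ∀ i < l, ∃ j, a j = b * ζ ^ i) := by
  classical
  have hl0 : 0 < l := by omega
  have hkey : ∀ s : ℕ, ζ ^ s = ζ ^ (s % l) := by
    intro s
    conv_lhs => rw [← Nat.mod_add_div s l]
    rw [pow_add, pow_mul, hζ.pow_eq_one, one_pow, mul_one]
  have hpow : ∀ s t : ℕ, s % l = t % l → ζ ^ s = ζ ^ t := by
    intro s t h
    rw [hkey s, hkey t, h]
  constructor
  · rintro ⟨b, hb, c, hc⟩
    refine ⟨b, hb, fun i hi => ?_⟩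
    have hbz : b * ζ ^ i ≠ 0 := mul_ne_zero hb (pow_ne_zero _ (hζ.ne_zero hl0.ne'))
    set x : ℂ := (b * ζ ^ i)⁻¹ with hx
    have hxeval : Polynomial.eval x (1 - C (b ^ l) * X ^ l) = 0 := by
      have h1 : x ^ l = (b ^ l)⁻¹ := by
        rw [hx, inv_pow, mul_pow, ← pow_mul, mul_comm i l, pow_mul, hζ.pow_eq_one, one_pow,
          mul_one]
      simp only [eval_sub, eval_one, eval_mul, eval_C, eval_pow, eval_X, h1]
      rw [mul_inv_cancel₀ (pow_ne_zero _ hb), sub_self]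
    have h2 : Polynomial.eval x (∏ j, (1 - C (a j) * X)) = 0 := by
      rw [hc, eval_mul, hxeval, zero_mul]
    rw [eval_prod] at h2
    obtain ⟨j, -, hj⟩ := Finset.prod_eq_zero_iff.mp h2
    simp only [eval_sub, eval_one, eval_mul, eval_C, eval_X] at hj
    have : a j * x = 1 := by linear_combination -hj
    refine ⟨j, ?_⟩
    have h6 : x * a j = 1 := by rw [mul_comm]; exact this
    have h5 : a j = x⁻¹ := eq_inv_of_mul_eq_one_right h6
    rw [h5, hx, inv_inv]
  · rintro ⟨b, hb, hpres⟩
    refine ⟨b, hb, ?_⟩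
    have J : ∀ i : ℕ, i < l → {j : Fin m // a j = b * ζ ^ ((l - i) % l)} := by
      intro i hi
      exact ⟨(hpres ((l - i) % l) (Nat.mod_lt _ hl0)).choose,
        (hpres ((l - i) % l) (Nat.mod_lt _ hl0)).choose_spec⟩
    set f : ℕ → Fin m := fun i => if h : i < l then (J i h).1 else
      (J 0 hl0).1 with hf
    have hfval : ∀ i < l, a (f i) = b * ζ ^ (l - i) := by
      intro i hi
      have := (J i hi).2
      rw [hf]; simp only [dif_pos hi]
      rw [this, hpow ((l - i) % l) (l - i) (Nat.mod_mod_of_dvd _ dvd_rfl)]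
    have hinj : Set.InjOn f (Finset.range l) := by
      intro i hi i' hi' hii
      rw [Finset.coe_range, Set.mem_Iio] at hi hi'
      have h1 : a (f i) = a (f i') := by rw [hii]
      rw [hfval i hi, hfval i' hi'] at h1
      have h2 : ζ ^ (l - i) = ζ ^ (l - i') := by
        field_simp at h1
        tauto
      have h3 : ζ ^ ((l - i) % l) = ζ ^ ((l - i') % l) := by
        rw [hpow ((l - i) % l) (l - i) (Nat.mod_mod_of_dvd _ dvd_rfl),
          hpow ((l - i') % l) (l - i') (Nat.mod_mod_of_dvd _ dvd_rfl), h2]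
      have h4 := hζ.pow_inj (Nat.mod_lt _ hl0) (Nat.mod_lt _ hl0) h3
      rcases Nat.eq_zero_or_pos i with rfl | hip
      · rcases Nat.eq_zero_or_pos i' with rfl | hip'
        · rfl
        · rw [Nat.sub_zero, Nat.mod_self, Nat.mod_eq_of_lt (by omega)] at h4
          omega
      · rcases Nat.eq_zero_or_pos i' with rfl | hip'
        · rw [Nat.sub_zero, Nat.mod_self, Nat.mod_eq_of_lt (by omega)] at h4
          omega
        · rw [Nat.mod_eq_of_lt (by omega), Nat.mod_eq_of_lt (by omega)] at h4
          omega
    have hprodeq : ∏ j ∈ (Finset.range l).image f, ((1 : ℂ[X]) - C (a j) * X)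
        = ∏ i ∈ Finset.range l, (1 - C (a (f i)) * X) := by
      rw [Finset.prod_image]
      intro x hx y hy h
      exact hinj (Finset.mem_coe.mpr hx) (Finset.mem_coe.mpr hy) h
    rw [one_sub_pow_eq_prod l hl3 hodd ζ hζ b hb]
    have : ∏ i ∈ Finset.range l, (1 - C (b * ζ ^ (l - i)) * X)
        = ∏ i ∈ Finset.range l, (1 - C (a (f i)) * X) := by
      refine Finset.prod_congr rfl fun i hi => ?_
      rw [hfval i (Finset.mem_range.mp hi)]
    rw [this, ← hprodeq]
    exact Finset.prod_dvd_prod_of_subset _ _ _ (Finset.subset_univ _)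

/-- Let `l ≥ 3` be odd, `ζ` a primitive `l`-th root of unity, and `a_1,…,a_m ∈ ℂ^×`.
There is a permutation `σ` with `a_{σ(j)}/a_{σ(k)} ≠ ζ^{-2}` for all `j < k` if and only if
the polynomial `∏_j (1 - a_j u)` is not divisible by `1 - b^l u^l` for any `b ∈ ℂ^×`. -/
theorem stmt10 (l : ℕ) (hl3 : 3 ≤ l) (hodd : Odd l) (ζ : ℂ) (hζ : IsPrimitiveRoot ζ l)
    (m : ℕ) (a : Fin m → ℂ) (ha : ∀ j, a j ≠ 0) :
    (∃ σ : Equiv.Perm (Fin m), ∀ j k : Fin m, j < k → a (σ j) / a (σ k) ≠ ζ ^ (-2 : ℤ)) ↔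
      ¬ ∃ b : ℂ, b ≠ 0 ∧ (1 - C (b ^ l) * X ^ l) ∣ ∏ j, (1 - C (a j) * X) := by
  classical
  have hl0 : 0 < l := by omega
  have hζ0 : ζ ≠ 0 := hζ.ne_zero hl0.ne'
  have hkey : ∀ s : ℕ, ζ ^ s = ζ ^ (s % l) := by
    intro s
    conv_lhs => rw [← Nat.mod_add_div s l]
    rw [pow_add, pow_mul, hζ.pow_eq_one, one_pow, mul_one]
  have hpow : ∀ s t : ℕ, s % l = t % l → ζ ^ s = ζ ^ t := by
    intro s t h
    rw [hkey s, hkey t, h]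
  rw [dvd_iff_orbit l hl3 hodd ζ hζ m a ha]
  constructor
  · rintro ⟨σ, hσ⟩ ⟨b, hb, hpres⟩
    -- choose a witness index for each exponent
    have q : ∀ i : ℕ, {j : Fin m // a j = b * ζ ^ (i % l)} := by
      intro i
      exact ⟨(hpres (i % l) (Nat.mod_lt _ hl0)).choose,
        (hpres (i % l) (Nat.mod_lt _ hl0)).choose_spec⟩
    set f : ℕ → ℕ := fun n => ((σ.symm (q (2 * n)).1) : ℕ) with hfdef
    refine no_strictAnti' f fun n => ?_
    set p : Fin m := (q (2 * n)).1 with hp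
    set p' : Fin m := (q (2 * n + 2)).1 with hp'
    have hap : a p = b * ζ ^ ((2 * n) % l) := (q (2 * n)).2
    have hap' : a p' = b * ζ ^ ((2 * n + 2) % l) := (q (2 * n + 2)).2
    have hne : p ≠ p' := by
      intro h
      have h1 : ζ ^ ((2 * n) % l) = ζ ^ ((2 * n + 2) % l) := by
        have := hap.symm.trans (h ▸ hap')
        exact mul_left_cancel₀ hb this
      have h2 := hζ.pow_inj (Nat.mod_lt _ hl0) (Nat.mod_lt _ hl0) h1
      have h3 : (2 * n) % l = (2 * n + 2) % l := h2
      have hm : 2 * n + 0 ≡ 2 * n + 2 [MOD l] := by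
        show (2 * n + 0) % l = (2 * n + 2) % l
        simpa using h3
      have h4 : (0 : ℕ) % l = 2 % l := Nat.ModEq.add_left_cancel' (2 * n) hm
      rw [Nat.zero_mod, Nat.mod_eq_of_lt (by omega)] at h4
      omega
    have hdiv : a p / a p' = ζ ^ (-2 : ℤ) := by
      have hz : ζ ^ ((2 * n) % l) * ζ ^ 2 = ζ ^ ((2 * n + 2) % l) := by
        rw [← pow_add]
        apply hpow
        conv_lhs => rw [Nat.add_mod, Nat.mod_mod_of_dvd _ dvd_rfl, ← Nat.add_mod]
        rw [Nat.mod_mod_of_dvd _ dvd_rfl]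
      have h2 : a p * ζ ^ 2 = a p' := by
        rw [hap, hap', mul_assoc, hz]
      have hap'ne : a p' ≠ 0 := ha p'
      rw [div_eq_iff hap'ne, ← h2]
      rw [zpow_neg, show ((2:ℤ)) = ((2:ℕ) : ℤ) by norm_num, zpow_natCast]
      field_simp
      try ring
    -- now derive f (n+1) < f n
    by_contra hle
    push_neg at hle
    have hlt : σ.symm p < σ.symm p' := by
      have : σ.symm p ≠ σ.symm p' := fun h => hne (σ.symm.injective h)
      have h1 : (σ.symm p : ℕ) ≤ (σ.symm p' : ℕ) := by
        have : f n ≤ f (n + 1) := hle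
        exact this
      exact lt_of_le_of_ne (by exact Fin.le_def.mpr h1) this
    exact hσ _ _ hlt (by simpa using hdiv)
  · intro horb
    -- define the rank function
    set P : Fin m → ℕ → Prop := fun p t => ∀ s, 1 ≤ s → s ≤ t → ∃ r, a r = ζ ^ (2 * s) * a p
      with hP
    set g : Fin m → ℕ := fun p => Nat.findGreatest (P p) l with hg
    have hP0 : ∀ p, P p 0 := by intro p s h1 h2; omega
    have hPg : ∀ p, P p (g p) := fun p => Nat.findGreatest_spec (Nat.zero_le l) (hP0 p)
    have hgle : ∀ p, g p ≤ l := fun p => Nat.findGreatest_le l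
    have hglt : ∀ p, g p < l := by
      intro p
      rcases lt_or_eq_of_le (hgle p) with h | h
      · exact h
      · exfalso
        have hPl : P p l := h ▸ hPg p
        refine horb ⟨a p, ha p, fun i hi => ?_⟩
        obtain ⟨t, ht⟩ := hodd
        have h2 : 2 * ((l + 1) / 2) = l + 1 := by omega
        set s' : ℕ := ((l + 1) / 2 * i) % l with hs'
        set s : ℕ := if s' = 0 then l else s' with hs
        have hs1 : 1 ≤ s := by
          rw [hs]; split <;> omega
        have hsl : s ≤ l := by
          rw [hs]; split
          · omega
          · exact (Nat.mod_lt _ hl0).le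
        have hmod : (2 * s) % l = i % l := by
          have e1 : (2 * s) % l = (2 * s') % l := by
            rw [hs]; split
            · rename_i h0
              rw [h0, Nat.mul_mod_left]; simp
            · rfl
          have e2 : (2 * s') % l = (2 * ((l + 1) / 2 * i)) % l := by
            rw [hs', Nat.mul_mod, Nat.mod_mod_of_dvd _ dvd_rfl, ← Nat.mul_mod]
          have e3 : 2 * ((l + 1) / 2 * i) = (l + 1) * i := by
            rw [← mul_assoc, h2]
          have e4 : ((l + 1) * i) % l = i % l := by
            rw [show (l + 1) * i = i + l * i from by ring, Nat.add_mul_mod_self_left]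
          rw [e1, e2, e3, e4]
        obtain ⟨r, hr⟩ := hPl s hs1 hsl
        refine ⟨r, ?_⟩
        rw [hr, hpow (2 * s) i hmod, mul_comm]
    have hedge : ∀ p p' : Fin m, a p = ζ ^ 2 * a p' → g p < g p' := by
      intro p p' hpp'
      have hstep : P p' (g p + 1) := by
        intro s h1 h2
        rcases Nat.eq_or_lt_of_le h1 with h | h
        · refine ⟨p, ?_⟩
          rw [hpp', ← h]
          try norm_num
        · obtain ⟨r, hr⟩ := hPg p (s - 1) (by omega) (by omega)
          refine ⟨r, ?_⟩
          rw [hr, hpp', ← mul_assoc, ← pow_add]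
          congr 2
          omega
      have h9 : g p + 1 ≤ g p' :=
        Nat.le_findGreatest (show g p + 1 ≤ l by have := hglt p; omega) hstep
      omega
    refine ⟨Tuple.sort g, fun j k hjk hcon => ?_⟩
    set σ := Tuple.sort g with hσ
    have hmono : g (σ j) ≤ g (σ k) := Tuple.monotone_sort g hjk.le
    have h1 : a (σ j) = ζ ^ (-2 : ℤ) * a (σ k) := by
      rw [← hcon, div_mul_cancel₀ _ (ha (σ k))]
    have hz2 : (ζ : ℂ) ^ (2 : ℕ) * ζ ^ (-2 : ℤ) = 1 := by
      rw [← zpow_natCast ζ 2, ← zpow_add₀ hζ0]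
      norm_num
    have h2 : a (σ k) = ζ ^ 2 * a (σ j) := by
      rw [h1, ← mul_assoc, hz2, one_mul]
    have := hedge (σ k) (σ j) h2
    omega
end
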